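/- arXiv:2210.13065 — 7 statements merged into one kernel-verified Lean document; each statement's English description precedes it below -/
import Mathlib

section
/- Let (D,v) be a nonnegative monotonic cooperative game with v(D) > 0. For ε > 0 define the positive game v_ε by v_ε(A) = ε if v(A) = 0 and v_ε(A) = v(A) otherwise. Then for every player i ∈ D, the proportional value PV_i(D, v_ε) converges, as ε → 0⁺, to the extended proportional value PV⁰_i of (D,v). -/
open Finset

/-- The ratio potential `R(A, v)` of a cooperative game, defined recursively by
`R(∅, v) = 1` and `R(A, v) = v(A) · (Σ_{j∈A} R(A\{j}, v)⁻¹)⁻¹` for nonempty `A`. -/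
noncomputable def ratioPot {d : ℕ} (v : Finset (Fin d) → ℝ) (A : Finset (Fin d)) : ℝ :=
  if A = ∅ then 1
  else v A * (∑ j ∈ A.attach, (ratioPot v (A.erase j.1))⁻¹)⁻¹
termination_by A.card
decreasing_by exact Finset.card_erase_lt_of_mem j.2

section AuxPV
open Filter

lemma ratioPot_empty {d : ℕ} (v : Finset (Fin d) → ℝ) : ratioPot v ∅ = 1 := by
  rw [ratioPot]; simp

lemma ratioPot_eq {d : ℕ} (v : Finset (Fin d) → ℝ) {A : Finset (Fin d)} (hA : A ≠ ∅) :
    ratioPot v A = v A * (∑ j ∈ A, (ratioPot v (A.erase j))⁻¹)⁻¹ := by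
  rw [ratioPot, if_neg hA, Finset.sum_attach A (fun j => (ratioPot v (A.erase j))⁻¹)]

lemma ratioPot_pos {d : ℕ} {v : Finset (Fin d) → ℝ} :
    ∀ {A : Finset (Fin d)}, (∀ C ⊆ A, C ≠ ∅ → 0 < v C) → 0 < ratioPot v A := by
  intro A
  induction A using Finset.strongInduction with
  | _ A ih =>
    intro hv
    rcases eq_or_ne A ∅ with rfl | hA
    · simp [ratioPot_empty]
    · rw [ratioPot_eq v hA]
      obtain ⟨j, hj⟩ := Finset.nonempty_iff_ne_empty.2 hA
      have hsum : 0 < ∑ j ∈ A, (ratioPot v (A.erase j))⁻¹ := by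
        apply Finset.sum_pos
        · intro k hk
          exact inv_pos.2 (ih _ (Finset.erase_ssubset hk)
            (fun C hC hC' => hv C (hC.trans (Finset.erase_subset _ _)) hC'))
        · exact ⟨j, hj⟩
      exact mul_pos (hv A le_rfl hA) (inv_pos.2 hsum)

section
variable {d : ℕ} (v : Finset (Fin d) → ℝ)

open scoped Classical in
/-- null subsets of `A` -/
noncomputable def NK (A : Finset (Fin d)) : Finset (Finset (Fin d)) :=
  A.powerset.filter (fun T => v T = 0)

/-- max cardinality of a null subset of `A` -/
noncomputable def mA (A : Finset (Fin d)) : ℕ := (NK v A).sup Finset.card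

open scoped Classical in
noncomputable def KmaxA (A : Finset (Fin d)) : Finset (Finset (Fin d)) :=
  (NK v A).filter (fun T => T.card = mA v A)

noncomputable def LA (A : Finset (Fin d)) : ℝ :=
  (((mA v A).factorial : ℝ) *
    ∑ T ∈ KmaxA v A, (ratioPot (fun B => v (T ∪ B)) (A \ T))⁻¹)⁻¹

variable {v}
variable (hv0 : v ∅ = 0) (hnonneg : ∀ A : Finset (Fin d), 0 ≤ v A)
  (hmono : ∀ T A : Finset (Fin d), T ⊆ A → v T ≤ v A)

lemma mem_NK {A T : Finset (Fin d)} : T ∈ NK v A ↔ T ⊆ A ∧ v T = 0 := by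
  classical simp [NK]

lemma mem_KmaxA {A T : Finset (Fin d)} :
    T ∈ KmaxA v A ↔ (T ⊆ A ∧ v T = 0) ∧ T.card = mA v A := by
  classical simp [KmaxA, mem_NK]


include hv0 in
lemma NK_nonempty (A : Finset (Fin d)) : (NK v A).Nonempty :=
  ⟨∅, mem_NK.2 ⟨Finset.empty_subset _, hv0⟩⟩

include hv0 in
lemma KmaxA_nonempty (A : Finset (Fin d)) : (KmaxA v A).Nonempty := by
  obtain ⟨T, hT, hc⟩ := Finset.exists_mem_eq_sup _ (NK_nonempty hv0 A) Finset.card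
  exact ⟨T, by simpa [mem_KmaxA, mA, (mem_NK.1 hT).1, (mem_NK.1 hT).2] using hc.symm⟩


lemma mA_le_card (A : Finset (Fin d)) : mA v A ≤ A.card :=
  Finset.sup_le (fun T hT => Finset.card_le_card (mem_NK.1 hT).1)

lemma le_mA {A T : Finset (Fin d)} (hT : T ⊆ A) (h0 : v T = 0) : T.card ≤ mA v A :=
  Finset.le_sup (mem_NK.2 ⟨hT, h0⟩)

lemma mA_mono {A B : Finset (Fin d)} (h : B ⊆ A) : mA v B ≤ mA v A :=
  Finset.sup_le (fun T hT => le_mA ((mem_NK.1 hT).1.trans h) (mem_NK.1 hT).2)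

include hv0 in
lemma mA_lt_card {A : Finset (Fin d)} (hA : v A ≠ 0) : mA v A < A.card := by
  rcases lt_or_eq_of_le (mA_le_card (v := v) A) with h | h
  · exact h
  · exfalso
    obtain ⟨T, hT, hc⟩ := Finset.exists_mem_eq_sup _ (NK_nonempty hv0 A) Finset.card
    obtain ⟨hTA, hT0⟩ := mem_NK.1 hT
    have : T = A := Finset.eq_of_subset_of_card_le hTA (by
      rw [← hc, ← h] at *; exact le_of_eq rfl)
    exact hA (this ▸ hT0)

include hv0 in
lemma KmaxA_null {A : Finset (Fin d)} (hA : v A = 0) :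
    mA v A = A.card ∧ KmaxA v A = {A} := by
  have hm : mA v A = A.card :=
    le_antisymm (mA_le_card A) (le_mA (le_refl A) hA)
  refine ⟨hm, ?_⟩
  ext T
  simp only [mem_KmaxA, Finset.mem_singleton, hm]
  constructor
  · rintro ⟨⟨hTA, -⟩, hc⟩
    exact Finset.eq_of_subset_of_card_le hTA hc.ge
  · rintro rfl; exact ⟨⟨le_refl _, hA⟩, rfl⟩

-- positivity of subgame ratio potentials
include hnonneg hmono in
lemma ratioPot_subgame_pos {A T B : Finset (Fin d)} (hT : T ∈ KmaxA v A) (hB : B ⊆ A \ T) :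
    0 < ratioPot (fun C => v (T ∪ C)) B := by
  obtain ⟨⟨hTA, hT0⟩, hTc⟩ := mem_KmaxA.1 hT
  apply ratioPot_pos
  intro C hC hC0
  replace hC : C ⊆ A \ T := hC.trans hB
  rcases lt_or_ge 0 (v (T ∪ C)) with h | h
  · exact h
  have h0 : v (T ∪ C) = 0 := le_antisymm h (hnonneg _)
  exfalso
  have hsub : T ∪ C ⊆ A := Finset.union_subset hTA ((hC.trans (Finset.sdiff_subset)))
  have hd : Disjoint T C := (Finset.sdiff_disjoint.mono_left hC).symm
  have hcard : (T ∪ C).card = T.card + C.card := Finset.card_union_of_disjoint hd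
  have : (T ∪ C).card ≤ mA v A := le_mA hsub h0
  rw [hcard, hTc] at this
  have : C.card = 0 := by omega
  exact hC0 (Finset.card_eq_zero.1 this)

include hv0 hnonneg hmono in
lemma LA_sum_pos (A : Finset (Fin d)) :
    0 < ∑ T ∈ KmaxA v A, (ratioPot (fun B => v (T ∪ B)) (A \ T))⁻¹ :=
  Finset.sum_pos (fun T hT => inv_pos.2 (ratioPot_subgame_pos hnonneg hmono hT (le_refl _)))
    (KmaxA_nonempty hv0 A)

include hv0 hnonneg hmono in
lemma LA_pos (A : Finset (Fin d)) : 0 < LA v A := by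
  apply inv_pos.2
  exact mul_pos (by positivity) (LA_sum_pos hv0 hnonneg hmono A)

include hnonneg hmono in
/-- exact value of the ratio potential of `v_ε` on a null coalition -/
lemma ratioPot_null_exact {ε : ℝ} (hε : ε ≠ 0) :
    ∀ {A : Finset (Fin d)}, v A = 0 →
      ratioPot (fun B => if v B = 0 then ε else v B) A = ε ^ A.card / (A.card).factorial := by
  intro A
  induction A using Finset.strongInduction with
  | _ A ih =>
    intro hA
    rcases eq_or_ne A ∅ with rfl | hA0
    · simp [ratioPot_empty]
    · rw [ratioPot_eq _ hA0]
      have hcard : ∀ j ∈ A, (A.erase j).card = A.card - 1 :=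
        fun j hj => Finset.card_erase_of_mem hj
      have hAc : 1 ≤ A.card := Finset.card_pos.2 (Finset.nonempty_iff_ne_empty.2 hA0)
      have hsum : ∑ j ∈ A, (ratioPot (fun B => if v B = 0 then ε else v B) (A.erase j))⁻¹
          = A.card * (ε ^ (A.card - 1) / ((A.card - 1)).factorial)⁻¹ := by
        rw [Finset.sum_congr rfl (fun j hj => by
          rw [ih _ (Finset.erase_ssubset hj) (le_antisymm
            (hA ▸ hmono _ _ (Finset.erase_subset _ _)) (hnonneg _)), hcard j hj])]
        rw [Finset.sum_const, nsmul_eq_mul]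
      rw [hsum, if_pos hA]
      have hfac : (A.card).factorial = A.card * (A.card - 1).factorial := by
        conv_lhs => rw [show A.card = (A.card - 1) + 1 by omega]
        rw [Nat.factorial_succ]
        congr 1; omega
      have hpow : ε ^ A.card = ε * ε ^ (A.card - 1) := by
        conv_lhs => rw [show A.card = (A.card - 1) + 1 by omega]
        ring
      rw [hfac, hpow]
      have h1 : (0:ℝ) < ((A.card - 1).factorial : ℝ) := by positivity
      have h2 : (0:ℝ) < (A.card : ℝ) := by positivity
      have h3 : ε ^ (A.card - 1) ≠ 0 := pow_ne_zero _ hε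
      push_cast
      field_simp
      try ring


include hv0 hnonneg hmono in
lemma main_tendsto (A : Finset (Fin d)) :
    Filter.Tendsto
      (fun ε : ℝ => ratioPot (fun B => if v B = 0 then ε else v B) A / ε ^ (mA v A))
      (nhdsWithin 0 (Set.Ioi 0)) (nhds (LA v A)) := by
  classical
  induction A using Finset.strongInduction with
  | _ A ih =>
    rcases eq_or_ne (v A) 0 with hA | hA
    · obtain ⟨hm, hK⟩ := KmaxA_null hv0 hA
      have hL : LA v A = ((A.card).factorial : ℝ)⁻¹ := by
        simp [LA, hK, hm, ratioPot_empty]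
      rw [hL, hm]
      refine Filter.Tendsto.congr' ?_ tendsto_const_nhds
      filter_upwards [self_mem_nhdsWithin] with ε hε
      have hε0 : (0:ℝ) < ε := hε
      rw [ratioPot_null_exact hnonneg hmono hε0.ne' hA]
      have h1 : ((A.card).factorial : ℝ) ≠ 0 := by positivity
      have h2 : ε ^ A.card ≠ 0 := pow_ne_zero _ hε0.ne'
      field_simp
    · have hvA : 0 < v A := (hnonneg A).lt_of_ne (Ne.symm hA)
      have hAne : A ≠ ∅ := by rintro rfl; exact hA hv0
      have hmj : ∀ j ∈ A, mA v (A.erase j) ≤ mA v A :=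
        fun j _ => mA_mono (Finset.erase_subset _ _)
      set w : ℝ → Finset (Fin d) → ℝ := fun ε B => if v B = 0 then ε else v B with hwdef
      set term : Fin d → ℝ → ℝ := fun j ε =>
        ε ^ (mA v A - mA v (A.erase j)) *
          (ratioPot (w ε) (A.erase j) / ε ^ (mA v (A.erase j)))⁻¹ with htermdef
      have hterm : ∀ j ∈ A, Filter.Tendsto (term j) (nhdsWithin 0 (Set.Ioi 0))
          (nhds ((0:ℝ) ^ (mA v A - mA v (A.erase j)) * (LA v (A.erase j))⁻¹)) := by
        intro j hj
        refine Filter.Tendsto.mul ?_ ?_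
        · exact ((continuous_pow _).tendsto 0).mono_left nhdsWithin_le_nhds
        · exact (ih _ (Finset.erase_ssubset hj)).inv₀ (LA_pos hv0 hnonneg hmono _).ne'
      have hsum : Filter.Tendsto (fun ε => ∑ j ∈ A, term j ε) (nhdsWithin 0 (Set.Ioi 0))
          (nhds (∑ j ∈ A, (0:ℝ) ^ (mA v A - mA v (A.erase j)) * (LA v (A.erase j))⁻¹)) :=
        tendsto_finset_sum _ hterm
      set S := ∑ j ∈ A, (0:ℝ) ^ (mA v A - mA v (A.erase j)) * (LA v (A.erase j))⁻¹ with hSdef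
      have hSval : S = v A * (LA v A)⁻¹ := by
        have hjterm : ∀ j ∈ A,
            (0:ℝ) ^ (mA v A - mA v (A.erase j)) * (LA v (A.erase j))⁻¹
            = ((mA v A).factorial : ℝ) * ∑ T ∈ (KmaxA v A).filter (fun T => j ∉ T),
                (ratioPot (fun B => v (T ∪ B)) ((A.erase j) \ T))⁻¹ := by
          intro j hj
          rcases eq_or_lt_of_le (hmj j hj) with hEq | hLt
          · have hKj : KmaxA v (A.erase j) = (KmaxA v A).filter (fun T => j ∉ T) := by
              ext T
              simp only [mem_KmaxA, Finset.mem_filter, Finset.subset_erase, hEq]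
              tauto
            have hz : mA v A - mA v (A.erase j) = 0 := by omega
            rw [hz, pow_zero, one_mul, LA, inv_inv, hKj, hEq]
          · have hfe : (KmaxA v A).filter (fun T => j ∉ T) = ∅ := by
              rw [Finset.filter_eq_empty_iff]
              intro T hT hjT
              obtain ⟨⟨hTA, hT0⟩, hTc⟩ := mem_KmaxA.1 hT
              have : T.card ≤ mA v (A.erase j) :=
                le_mA (Finset.subset_erase.2 ⟨hTA, hjT⟩) hT0
              omega
            rw [hfe, zero_pow (by omega : mA v A - mA v (A.erase j) ≠ 0)]
            simp
        rw [hSdef, Finset.sum_congr rfl hjterm, ← Finset.mul_sum]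
        have hswap : ∑ j ∈ A, ∑ T ∈ (KmaxA v A).filter (fun T => j ∉ T),
              (ratioPot (fun B => v (T ∪ B)) ((A.erase j) \ T))⁻¹
            = ∑ T ∈ KmaxA v A, ∑ j ∈ A \ T,
              (ratioPot (fun B => v (T ∪ B)) ((A.erase j) \ T))⁻¹ := by
          simp_rw [Finset.sum_filter]
          rw [Finset.sum_comm]
          refine Finset.sum_congr rfl fun T _ => ?_
          rw [Finset.sdiff_eq_filter, Finset.sum_filter]
        rw [hswap]
        have hinner : ∀ T ∈ KmaxA v A, ∑ j ∈ A \ T,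
            (ratioPot (fun B => v (T ∪ B)) ((A.erase j) \ T))⁻¹
            = v A * (ratioPot (fun B => v (T ∪ B)) (A \ T))⁻¹ := by
          intro T hT
          obtain ⟨⟨hTA, hT0⟩, hTc⟩ := mem_KmaxA.1 hT
          have hTlt : T.card < A.card := by rw [hTc]; exact mA_lt_card hv0 hA
          have hne : (A \ T) ≠ ∅ := by
            intro h
            have hc := Finset.card_sdiff_of_subset hTA
            rw [h] at hc
            simp at hc
            omega
          have herase : ∀ j : Fin d, (A.erase j) \ T = (A \ T).erase j := by
            intro j; ext x
            simp only [Finset.mem_erase, Finset.mem_sdiff]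
            tauto
          simp_rw [herase]
          have hsum_pos : 0 < ∑ j ∈ A \ T, (ratioPot (fun B => v (T ∪ B)) ((A \ T).erase j))⁻¹ := by
            refine Finset.sum_pos (fun j _ => inv_pos.2
              (ratioPot_subgame_pos hnonneg hmono hT (Finset.erase_subset _ _)))
              (Finset.nonempty_iff_ne_empty.2 hne)
          have hRP := ratioPot_eq (fun B => v (T ∪ B)) hne
          simp only [Finset.union_sdiff_of_subset hTA] at hRP
          rw [hRP, mul_inv, inv_inv, ← mul_assoc, mul_inv_cancel₀ hvA.ne', one_mul]
        rw [Finset.sum_congr rfl hinner, ← Finset.mul_sum, LA, inv_inv]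
        ring
      have hSpos : 0 < S := by
        rw [hSval]
        exact mul_pos hvA (inv_pos.2 (LA_pos hv0 hnonneg hmono A))
      have hfinal : Filter.Tendsto (fun ε => v A * (∑ j ∈ A, term j ε)⁻¹)
          (nhdsWithin 0 (Set.Ioi 0)) (nhds (v A * S⁻¹)) :=
        (hsum.inv₀ hSpos.ne').const_mul _
      have hLval : v A * S⁻¹ = LA v A := by
        rw [hSval, mul_inv, inv_inv, ← mul_assoc, mul_inv_cancel₀ hvA.ne', one_mul]
      rw [← hLval]
      refine Filter.Tendsto.congr' ?_ hfinal
      filter_upwards [self_mem_nhdsWithin] with ε hε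
      have hε0 : (0:ℝ) < ε := hε
      have hterm_eq : ∀ j ∈ A, term j ε = ε ^ (mA v A) * (ratioPot (w ε) (A.erase j))⁻¹ := by
        intro j hj
        simp only [htermdef]
        rw [inv_div, div_eq_mul_inv, ← mul_assoc, ← pow_add, Nat.sub_add_cancel (hmj j hj)]
      rw [Finset.sum_congr rfl hterm_eq, ← Finset.mul_sum]
      rw [ratioPot_eq (w ε) hAne]
      have hwA : w ε A = v A := if_neg hA
      rw [hwA, mul_inv, div_eq_mul_inv]
      ring
end
end AuxPV




-- The coalitions with null value.
open scoped Classical in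
noncomputable def nullCoalitions {d : ℕ} (v : Finset (Fin d) → ℝ) : Finset (Finset (Fin d)) :=
  Finset.univ.filter (fun A => v A = 0)

/-- `k_max`: the cardinal of the largest null coalition. -/
noncomputable def kmax {d : ℕ} (v : Finset (Fin d) → ℝ) : ℕ :=
  (nullCoalitions v).sup Finset.card

-- `𝒦`: the set of null coalitions of cardinal `k_max`.
open scoped Classical in
noncomputable def maxNullCoalitions {d : ℕ} (v : Finset (Fin d) → ℝ) :
    Finset (Finset (Fin d)) :=
  (nullCoalitions v).filter (fun A => A.card = kmax v)

-- `𝒦_{-i}`: the set of null coalitions of `D\{i}` of cardinal `k_max`.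
open scoped Classical in
noncomputable def maxNullCoalitionsAvoiding {d : ℕ} (v : Finset (Fin d) → ℝ) (i : Fin d) :
    Finset (Finset (Fin d)) :=
  (maxNullCoalitions v).filter (fun A => i ∉ A)

-- `PV⁰_i`: the extended proportional value of player `i` for a nonnegative monotonic
-- cooperative game, where `v_A(B) = v(A ∪ B)`.
open scoped Classical in
noncomputable def PV0 {d : ℕ} (v : Finset (Fin d) → ℝ) (i : Fin d) : ℝ :=
  if ∀ A ∈ maxNullCoalitions v, i ∈ A then 0
  else
    (∑ A ∈ maxNullCoalitionsAvoiding v i,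
        (ratioPot (fun B => v (A ∪ B)) ((Finset.univ.erase i) \ A))⁻¹) /
    (∑ A ∈ maxNullCoalitions v, (ratioPot (fun B => v (A ∪ B)) (Finset.univ \ A))⁻¹)

/-- For a nonnegative monotonic cooperative game `(D, v)` with `v(D) > 0`, the
proportional values of the positive games `v_ε` (where null values are replaced by `ε > 0`)
converge, as `ε → 0⁺`, to the extended proportional values `PV⁰` of `(D, v)`. -/
theorem pv_eps_tendsto_pv0 {d : ℕ} (v : Finset (Fin d) → ℝ) (hv0 : v ∅ = 0)
    (hnonneg : ∀ A : Finset (Fin d), 0 ≤ v A)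
    (hmono : ∀ T A : Finset (Fin d), T ⊆ A → v T ≤ v A)
    (hD : 0 < v Finset.univ) (i : Fin d) :
    Filter.Tendsto
      (fun ε : ℝ =>
        ratioPot (fun A => if v A = 0 then ε else v A) Finset.univ /
          ratioPot (fun A => if v A = 0 then ε else v A) (Finset.univ.erase i))
      (nhdsWithin 0 (Set.Ioi 0)) (nhds (PV0 v i)) := by
  classical
  have hNK : nullCoalitions v = NK v Finset.univ := by
    ext T; simp [nullCoalitions, NK]
  have hk : kmax v = mA v Finset.univ := by rw [kmax, hNK]; rfl
  have hKuniv : maxNullCoalitions v = KmaxA v Finset.univ := by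
    ext T
    simp only [maxNullCoalitions, Finset.mem_filter, mem_KmaxA, hk]
    rw [hNK, mem_NK]
  -- positivity of the perturbed ratio potential
  have hRpos : ∀ (ε : ℝ), 0 < ε → ∀ A : Finset (Fin d),
      0 < ratioPot (fun B => if v B = 0 then ε else v B) A := by
    intro ε hε A
    apply ratioPot_pos
    intro C _ _
    by_cases h : v C = 0
    · simpa [h] using hε
    · simpa [h] using (hnonneg C).lt_of_ne (Ne.symm h)
  have h1 := main_tendsto hv0 hnonneg hmono Finset.univ
  have h2 := main_tendsto hv0 hnonneg hmono (Finset.univ.erase i)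
  have hL2 : (0:ℝ) < LA v (Finset.univ.erase i) := LA_pos hv0 hnonneg hmono _
  by_cases hcase : ∀ A ∈ maxNullCoalitions v, i ∈ A
  · -- degenerate case : PV0 = 0
    rw [PV0, if_pos hcase]
    obtain ⟨T0, hT0⟩ := KmaxA_nonempty (v := v) hv0 Finset.univ
    have hiT0 : i ∈ T0 := hcase T0 (by rw [hKuniv]; exact hT0)
    obtain ⟨⟨hT0A, hT00⟩, hT0c⟩ := mem_KmaxA.1 hT0
    have hm1 : 1 ≤ mA v Finset.univ := by
      rw [← hT0c]; exact Finset.card_pos.2 ⟨i, hiT0⟩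
    have hme : mA v (Finset.univ.erase i) = mA v Finset.univ - 1 := by
      apply le_antisymm
      · apply Finset.sup_le
        intro T hT
        obtain ⟨hTA, hT0'⟩ := mem_NK.1 hT
        have hle : T.card ≤ mA v Finset.univ := le_mA (Finset.subset_univ _) hT0'
        rcases eq_or_lt_of_le hle with hEq | hLt
        · exfalso
          have hTK : T ∈ maxNullCoalitions v := by
            rw [hKuniv]; exact mem_KmaxA.2 ⟨⟨Finset.subset_univ _, hT0'⟩, hEq⟩
          exact ((Finset.subset_erase.1 hTA).2) (hcase T hTK)
        · omega
      · have hnull : v (T0.erase i) = 0 :=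
          le_antisymm (hT00 ▸ hmono _ _ (Finset.erase_subset _ _)) (hnonneg _)
        have hsub : T0.erase i ⊆ Finset.univ.erase i :=
          Finset.erase_subset_erase i (Finset.subset_univ _)
        have := le_mA hsub hnull
        rw [Finset.card_erase_of_mem hiT0, hT0c] at this
        exact this
    rw [hme] at h2
    have hdiv := Filter.Tendsto.div h1 h2 hL2.ne'
    have hid : Filter.Tendsto (fun ε : ℝ => ε) (nhdsWithin 0 (Set.Ioi 0)) (nhds 0) :=
      Filter.tendsto_id.mono_left nhdsWithin_le_nhds
    have hmul := hid.mul hdiv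
    rw [zero_mul] at hmul
    refine Filter.Tendsto.congr' ?_ hmul
    filter_upwards [self_mem_nhdsWithin] with ε hε
    simp only [Pi.div_apply]
    have hε0 : (0:ℝ) < ε := hε
    have hR2 := hRpos ε hε0 (Finset.univ.erase i)
    have hpow : ε ^ (mA v Finset.univ) = ε * ε ^ (mA v Finset.univ - 1) := by
      conv_lhs => rw [show mA v Finset.univ = (mA v Finset.univ - 1) + 1 by omega]
      ring
    rw [hpow]
    have hεk : ε ^ (mA v Finset.univ - 1) ≠ 0 := pow_ne_zero _ hε0.ne'
    field_simp [hR2.ne']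
  · -- main case
    push_neg at hcase
    obtain ⟨T1, hT1, hiT1⟩ := hcase
    have hcase' : ¬ ∀ A ∈ maxNullCoalitions v, i ∈ A := by
      push_neg; exact ⟨T1, hT1, hiT1⟩
    rw [hKuniv] at hT1
    obtain ⟨⟨hT1A, hT10⟩, hT1c⟩ := mem_KmaxA.1 hT1
    have hme : mA v (Finset.univ.erase i) = mA v Finset.univ := by
      apply le_antisymm (mA_mono (Finset.erase_subset _ _))
      rw [← hT1c]
      exact le_mA (Finset.subset_erase.2 ⟨Finset.subset_univ _, hiT1⟩) hT10
    have hKe : KmaxA v (Finset.univ.erase i) = maxNullCoalitionsAvoiding v i := by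
      ext T
      rw [maxNullCoalitionsAvoiding, Finset.mem_filter, hKuniv]
      simp only [mem_KmaxA, Finset.subset_erase, hme]
      have := Finset.subset_univ T
      tauto
    have hPV : PV0 v i = LA v Finset.univ / LA v (Finset.univ.erase i) := by
      rw [PV0, if_neg hcase', LA, LA, hme, hKe, hKuniv]
      set N := ∑ A ∈ maxNullCoalitionsAvoiding v i,
        (ratioPot (fun B => v (A ∪ B)) ((Finset.univ.erase i) \ A))⁻¹ with hN
      set D := ∑ A ∈ KmaxA v Finset.univ,
        (ratioPot (fun B => v (A ∪ B)) (Finset.univ \ A))⁻¹ with hDdef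
      rw [inv_div_inv]
      rw [mul_div_mul_left _ _ (by positivity : ((mA v Finset.univ).factorial : ℝ) ≠ 0)]
    rw [hPV]
    rw [hme] at h2
    have hdiv := Filter.Tendsto.div h1 h2 hL2.ne'
    refine Filter.Tendsto.congr' ?_ hdiv
    filter_upwards [self_mem_nhdsWithin] with ε hε
    simp only [Pi.div_apply]
    have hε0 : (0:ℝ) < ε := hε
    have hR2 := hRpos ε hε0 (Finset.univ.erase i)
    have hεm : ε ^ (mA v Finset.univ) ≠ 0 := pow_ne_zero _ hε0.ne'
    field_simp [hR2.ne']
end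

section
/- Let (D,v) be a positive cooperative game. Then for every nonempty subset A ⊆ D, the inverse of the ratio potential admits the permutation expansion R(A,v)^{-1} = Σ_{π ∈ S_A} Π_{j=1}^{|A|} v(C_j(π))^{-1}, where S_A is the set of permutations of A. Consequently, for every i ∈ D, PV_i(D,v) = (Σ_{π ∈ S_{D\{i}}} Π_{j=1}^{d−1} v(C_j(π))^{-1}) / (Σ_{σ ∈ S_D} Π_{j=1}^{d} v(C_j(σ))^{-1}). -/
open Finset

/-- `C_j(e)`: the coalition made of the first `j` players in the ordering `e` of the
coalition `A` (an ordering of `A` being a bijection `Fin |A| ≃ A`). -/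
def subPermCoal {d : ℕ} (A : Finset (Fin d)) (e : Fin A.card ≃ {x // x ∈ A}) (j : ℕ) :
    Finset (Fin d) :=
  (Finset.univ.filter (fun k : Fin A.card => (k : ℕ) < j)).image (fun k => (e k : Fin d))

namespace RPAux

variable {d : ℕ}

/-- Extend an ordering of `A.erase a` to one of `A`, putting `a` last. -/
def extCore (A : Finset (Fin d)) (a : {x // x ∈ A})
    (e' : Fin (A.erase a.1).card ≃ {x // x ∈ A.erase a.1}) (k : Fin A.card) : {x // x ∈ A} :=
  if h : (k : ℕ) = A.card - 1 then a
  else ⟨(e' ⟨k, by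
      have h1 : (A.erase a.1).card = A.card - 1 := Finset.card_erase_of_mem a.2
      have h2 := k.2
      omega⟩ : Fin d),
    Finset.mem_of_mem_erase (e' _).2⟩

lemma extCore_last (A : Finset (Fin d)) (a : {x // x ∈ A}) (e') (k : Fin A.card)
    (h : (k : ℕ) = A.card - 1) : extCore A a e' k = a := dif_pos h

lemma extCore_lt (A : Finset (Fin d)) (a : {x // x ∈ A}) (e') (k : Fin A.card)
    (hk : (k : ℕ) < (A.erase a.1).card) :
    (extCore A a e' k : Fin d) = (e' ⟨k, hk⟩ : Fin d) := by
  have h1 : (A.erase a.1).card = A.card - 1 := Finset.card_erase_of_mem a.2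
  have h : (k : ℕ) ≠ A.card - 1 := by omega
  simp only [extCore, dif_neg h]

lemma extCore_bijective (A : Finset (Fin d)) (a : {x // x ∈ A})
    (e' : Fin (A.erase a.1).card ≃ {x // x ∈ A.erase a.1}) :
    Function.Bijective (extCore A a e') := by
  have h1 : (A.erase a.1).card = A.card - 1 := Finset.card_erase_of_mem a.2
  have h2 : 0 < A.card := Finset.card_pos.mpr ⟨a.1, a.2⟩
  constructor
  · intro k₁ k₂ hk
    by_cases c1 : (k₁ : ℕ) = A.card - 1 <;> by_cases c2 : (k₂ : ℕ) = A.card - 1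
    · exact Fin.ext (c1.trans c2.symm)
    · exfalso
      rw [extCore_last A a e' k₁ c1] at hk
      have hk2 : (k₂ : ℕ) < (A.erase a.1).card := by have := k₂.2; omega
      have := extCore_lt A a e' k₂ hk2
      rw [← hk] at this
      exact (Finset.ne_of_mem_erase (e' ⟨k₂, hk2⟩).2) this.symm
    · exfalso
      rw [extCore_last A a e' k₂ c2] at hk
      have hk1 : (k₁ : ℕ) < (A.erase a.1).card := by have := k₁.2; omega
      have := extCore_lt A a e' k₁ hk1
      rw [hk] at this
      exact (Finset.ne_of_mem_erase (e' ⟨k₁, hk1⟩).2) this.symm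
    · have hk1 : (k₁ : ℕ) < (A.erase a.1).card := by have := k₁.2; omega
      have hk2 : (k₂ : ℕ) < (A.erase a.1).card := by have := k₂.2; omega
      have e1 := extCore_lt A a e' k₁ hk1
      have e2 := extCore_lt A a e' k₂ hk2
      have : (e' ⟨k₁, hk1⟩ : Fin d) = (e' ⟨k₂, hk2⟩ : Fin d) := by
        rw [← e1, ← e2, hk]
      have := e'.injective (Subtype.ext this)
      rw [Fin.mk.injEq] at this
      exact Fin.ext this
  · intro x
    by_cases hx : x = a
    · refine ⟨⟨A.card - 1, by omega⟩, ?_⟩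
      rw [extCore_last A a e' _ rfl, hx]
    · have hxm : x.1 ∈ A.erase a.1 :=
        Finset.mem_erase.mpr ⟨fun h => hx (Subtype.ext h), x.2⟩
      set m := e'.symm ⟨x.1, hxm⟩ with hm
      have hmlt : (m : ℕ) < (A.erase a.1).card := m.2
      refine ⟨⟨(m : ℕ), by omega⟩, ?_⟩
      apply Subtype.ext
      rw [extCore_lt A a e' _ (show ((⟨(m : ℕ), by omega⟩ : Fin A.card) : ℕ) < (A.erase a.1).card from hmlt)]
      have : (⟨(m : ℕ), hmlt⟩ : Fin (A.erase a.1).card) = m := Fin.ext rfl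
      rw [this, hm, Equiv.apply_symm_apply]

/-- The extension as an `Equiv`. -/
noncomputable def extEquiv (A : Finset (Fin d)) (a : {x // x ∈ A})
    (e' : Fin (A.erase a.1).card ≃ {x // x ∈ A.erase a.1}) : Fin A.card ≃ {x // x ∈ A} :=
  Equiv.ofBijective (extCore A a e') (extCore_bijective A a e')

lemma extEquiv_apply (A : Finset (Fin d)) (a : {x // x ∈ A}) (e') (k : Fin A.card) :
    extEquiv A a e' k = extCore A a e' k := rfl

lemma subPermCoal_card (A : Finset (Fin d)) (e : Fin A.card ≃ {x // x ∈ A}) :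
    subPermCoal A e A.card = A := by
  ext x
  simp only [subPermCoal, Finset.mem_image, Finset.mem_filter, Finset.mem_univ, true_and]
  constructor
  · rintro ⟨k, _, rfl⟩
    exact (e k).2
  · intro hx
    exact ⟨e.symm ⟨x, hx⟩, (e.symm ⟨x, hx⟩).isLt, by rw [Equiv.apply_symm_apply]⟩

lemma extEquiv_subPermCoal (A : Finset (Fin d)) (a : {x // x ∈ A})
    (e' : Fin (A.erase a.1).card ≃ {x // x ∈ A.erase a.1}) (t : ℕ)
    (ht : t ≤ (A.erase a.1).card) :
    subPermCoal A (extEquiv A a e') t = subPermCoal (A.erase a.1) e' t := by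
  have h1 : (A.erase a.1).card = A.card - 1 := Finset.card_erase_of_mem a.2
  ext x
  simp only [subPermCoal, Finset.mem_image, Finset.mem_filter, Finset.mem_univ, true_and,
    extEquiv_apply]
  constructor
  · rintro ⟨k, hk, rfl⟩
    have hk' : (k : ℕ) < (A.erase a.1).card := by omega
    exact ⟨⟨k, hk'⟩, hk, (extCore_lt A a e' k hk').symm⟩
  · rintro ⟨k, hk, rfl⟩
    have hkA : (k : ℕ) < A.card := by have := k.2; omega
    refine ⟨⟨(k : ℕ), hkA⟩, hk, ?_⟩
    rw [extCore_lt A a e' ⟨(k : ℕ), hkA⟩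
      (show ((⟨(k : ℕ), hkA⟩ : Fin A.card) : ℕ) < (A.erase a.1).card from k.2)]

lemma sum_step (v : Finset (Fin d) → ℝ) (A : Finset (Fin d)) (hA : A ≠ ∅) :
    ∑ e : Fin A.card ≃ {x // x ∈ A},
        ∏ j ∈ Finset.range A.card, (v (subPermCoal A e (j + 1)))⁻¹
      = (v A)⁻¹ * ∑ a ∈ A.attach,
          ∑ e' : Fin (A.erase a.1).card ≃ {x // x ∈ A.erase a.1},
            ∏ j ∈ Finset.range (A.erase a.1).card,
              (v (subPermCoal (A.erase a.1) e' (j + 1)))⁻¹ := by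
  have hc : 0 < A.card := Finset.card_pos.mpr (Finset.nonempty_iff_ne_empty.mpr hA)
  have hsplit : ∀ e : Fin A.card ≃ {x // x ∈ A},
      ∏ j ∈ Finset.range A.card, (v (subPermCoal A e (j + 1)))⁻¹
        = (v A)⁻¹ * ∏ j ∈ Finset.range (A.card - 1), (v (subPermCoal A e (j + 1)))⁻¹ := by
    intro e
    have h : A.card - 1 + 1 = A.card := by omega
    calc ∏ j ∈ Finset.range A.card, (v (subPermCoal A e (j + 1)))⁻¹
        = ∏ j ∈ Finset.range (A.card - 1 + 1), (v (subPermCoal A e (j + 1)))⁻¹ := by rw [h]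
      _ = (∏ j ∈ Finset.range (A.card - 1), (v (subPermCoal A e (j + 1)))⁻¹) *
            (v (subPermCoal A e (A.card - 1 + 1)))⁻¹ := Finset.prod_range_succ _ _
      _ = (v A)⁻¹ * ∏ j ∈ Finset.range (A.card - 1), (v (subPermCoal A e (j + 1)))⁻¹ := by
            rw [h, subPermCoal_card, mul_comm]
  rw [Finset.sum_congr rfl (fun e _ => hsplit e), ← Finset.mul_sum]
  congr 1
  have hbij : Function.Bijective
      (fun p : Σ a : {x // x ∈ A}, (Fin (A.erase a.1).card ≃ {x // x ∈ A.erase a.1}) =>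
        extEquiv A p.1 p.2) := by
    constructor
    · rintro ⟨a, e₁⟩ ⟨b, e₂⟩ h
      have hL := congrArg (fun (e : Fin A.card ≃ {x // x ∈ A}) => e ⟨A.card - 1, by omega⟩) h
      simp only [extEquiv_apply] at hL
      rw [extCore_last A a e₁ _ rfl, extCore_last A b e₂ _ rfl] at hL
      subst hL
      simp only [Sigma.mk.inj_iff, heq_eq_eq, true_and]
      apply Equiv.ext
      intro k
      have h1 : (A.erase a.1).card = A.card - 1 := Finset.card_erase_of_mem a.2
      have hkA : (k : ℕ) < A.card := by have := k.2; omega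
      have hk' : ((⟨(k : ℕ), hkA⟩ : Fin A.card) : ℕ) < (A.erase a.1).card := k.2
      have hv := congrArg (fun (e : Fin A.card ≃ {x // x ∈ A}) => e ⟨(k : ℕ), hkA⟩) h
      simp only [extEquiv_apply] at hv
      have e1 := extCore_lt A a e₁ ⟨(k : ℕ), hkA⟩ hk'
      have e2 := extCore_lt A a e₂ ⟨(k : ℕ), hkA⟩ hk'
      have : (e₁ ⟨(k : ℕ), k.2⟩ : Fin d) = (e₂ ⟨(k : ℕ), k.2⟩ : Fin d) := by
        rw [← e1, ← e2, hv]
      have h12 : e₁ ⟨(k : ℕ), k.2⟩ = e₂ ⟨(k : ℕ), k.2⟩ := Subtype.ext this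
      have hk : (⟨(k : ℕ), k.2⟩ : Fin (A.erase a.1).card) = k := Fin.ext rfl
      rwa [hk] at h12
    · intro e
      have hc0 : 0 < A.card := hc
      set a : {x // x ∈ A} := e ⟨A.card - 1, by omega⟩ with ha
      have h1 : (A.erase a.1).card = A.card - 1 := Finset.card_erase_of_mem a.2
      have tbij : Function.Bijective
          (fun k : Fin (A.erase a.1).card =>
            (⟨(e ⟨(k : ℕ), by have := k.2; omega⟩ : Fin d), by
              refine Finset.mem_erase.mpr ⟨?_, (e _).2⟩
              intro hEq
              have : e ⟨(k : ℕ), by have := k.2; omega⟩ = a := Subtype.ext hEq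
              have h2 := e.injective (this.trans ha)
              rw [Fin.mk.injEq] at h2
              have := k.2; omega⟩ : {x // x ∈ A.erase a.1})) := by
        constructor
        · intro k₁ k₂ hk
          have hv := congrArg Subtype.val hk
          dsimp only at hv
          have := e.injective (Subtype.ext hv)
          rw [Fin.mk.injEq] at this
          exact Fin.ext this
        · intro x
          have hxa : x.1 ≠ a.1 := (Finset.mem_erase.mp x.2).1
          set m := e.symm ⟨x.1, Finset.mem_of_mem_erase x.2⟩ with hm
          have hme : e m = ⟨x.1, Finset.mem_of_mem_erase x.2⟩ := by
            rw [hm, Equiv.apply_symm_apply]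
          have hmne : (m : ℕ) ≠ A.card - 1 := by
            intro hEq
            apply hxa
            have h3 : m = (⟨A.card - 1, by omega⟩ : Fin A.card) := Fin.ext hEq
            have h4 : e m = a := by rw [h3]
            rw [hme] at h4
            exact congrArg Subtype.val h4
          have hmlt : (m : ℕ) < (A.erase a.1).card := by have := m.2; omega
          refine ⟨⟨(m : ℕ), hmlt⟩, ?_⟩
          apply Subtype.ext
          have h5 : ∀ (j : Fin A.card), j = m → ((e j : Fin d) = x.1) := by
            intro j hj; rw [hj, hme]
          exact h5 _ (Fin.ext rfl)
      refine ⟨⟨a, Equiv.ofBijective _ tbij⟩, ?_⟩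
      apply Equiv.ext
      intro k
      simp only [extEquiv_apply]
      by_cases hk : (k : ℕ) = A.card - 1
      · rw [extCore_last A a _ k hk, ha]
        congr 1
        exact Fin.ext hk.symm
      · have hk' : (k : ℕ) < (A.erase a.1).card := by have := k.2; omega
        apply Subtype.ext
        rw [extCore_lt A a _ k hk']
        have h5 : ∀ (j : Fin A.card), j = k → ((e j : Fin d) = (e k : Fin d)) := by
          intro j hj; rw [hj]
        exact h5 _ (Fin.ext rfl)
  have hcompat : ∀ p : Σ a : {x // x ∈ A}, (Fin (A.erase a.1).card ≃ {x // x ∈ A.erase a.1}),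
      (∏ j ∈ Finset.range (A.erase p.1.1).card,
        (v (subPermCoal (A.erase p.1.1) p.2 (j + 1)))⁻¹)
      = ∏ j ∈ Finset.range (A.card - 1), (v (subPermCoal A (extEquiv A p.1 p.2) (j + 1)))⁻¹ := by
    rintro ⟨a, e'⟩
    have h1 : (A.erase a.1).card = A.card - 1 := Finset.card_erase_of_mem a.2
    rw [← h1]
    refine Finset.prod_congr rfl fun j hj => ?_
    rw [extEquiv_subPermCoal A a e' (j + 1) (by have := Finset.mem_range.mp hj; omega)]
  rw [show (∑ e : Fin A.card ≃ {x // x ∈ A},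
      ∏ j ∈ Finset.range (A.card - 1), (v (subPermCoal A e (j + 1)))⁻¹)
      = ∑ p : Σ a : {x // x ∈ A}, (Fin (A.erase a.1).card ≃ {x // x ∈ A.erase a.1}),
          ∏ j ∈ Finset.range (A.erase p.1.1).card,
            (v (subPermCoal (A.erase p.1.1) p.2 (j + 1)))⁻¹ from
    (Fintype.sum_bijective _ hbij _ _ hcompat).symm]
  rw [← Finset.univ_sigma_univ, Finset.sum_sigma]
  rfl

end RPAux

namespace RPAux

lemma sum_empty_case {d : ℕ} (v : Finset (Fin d) → ℝ) :
    ∑ e : Fin (∅ : Finset (Fin d)).card ≃ {x // x ∈ (∅ : Finset (Fin d))},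
      ∏ j ∈ Finset.range (∅ : Finset (Fin d)).card, (v (subPermCoal ∅ e (j + 1)))⁻¹ = 1 := by
  haveI hie : IsEmpty {x // x ∈ (∅ : Finset (Fin d))} :=
    ⟨fun x => absurd x.2 (Finset.notMem_empty x.1)⟩
  haveI hif : IsEmpty (Fin (∅ : Finset (Fin d)).card) :=
    ⟨fun k => absurd k.2 (by simp)⟩
  haveI : Subsingleton (Fin (∅ : Finset (Fin d)).card ≃ {x // x ∈ (∅ : Finset (Fin d))}) :=
    ⟨fun e₁ e₂ => Equiv.ext fun k => isEmptyElim k⟩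
  haveI : Unique (Fin (∅ : Finset (Fin d)).card ≃ {x // x ∈ (∅ : Finset (Fin d))}) :=
    uniqueOfSubsingleton (Equiv.equivOfIsEmpty _ _)
  rw [Fintype.sum_unique]
  simp [Finset.card_empty]

lemma main {d : ℕ} (v : Finset (Fin d) → ℝ) :
    ∀ (n : ℕ) (A : Finset (Fin d)), A.card ≤ n →
      (ratioPot v A)⁻¹ =
        ∑ e : Fin A.card ≃ {x // x ∈ A},
          ∏ j ∈ Finset.range A.card, (v (subPermCoal A e (j + 1)))⁻¹ := by
  intro n
  induction n with
  | zero =>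
    intro A hA
    have h0 : A = ∅ := Finset.card_eq_zero.mp (Nat.le_zero.mp hA)
    subst h0
    rw [ratioPot, if_pos rfl, inv_one, sum_empty_case]
  | succ n ih =>
    intro A hA
    by_cases h : A = ∅
    · subst h
      rw [ratioPot, if_pos rfl, inv_one, sum_empty_case]
    · rw [ratioPot, if_neg h, mul_inv, inv_inv, sum_step v A h]
      congr 1
      refine Finset.sum_congr rfl fun a _ => ?_
      have hlt : (A.erase a.1).card < A.card := Finset.card_erase_lt_of_mem a.2
      exact ih (A.erase a.1) (by omega)

end RPAux

/-- for a positive cooperative game, the inverse of the ratio potential admits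
the permutation expansion `R(A,v)⁻¹ = Σ_{π ∈ S_A} Π_{j=1}^{|A|} v(C_j(π))⁻¹`; consequently,
the proportional value `PV_i(D,v) = R(D,v)/R(D\{i},v)` is the ratio of the corresponding
sums over the permutations of `D\{i}` and of `D`. -/
theorem ratioPot_inv_perm_expansion {d : ℕ} (v : Finset (Fin d) → ℝ) (hv0 : v ∅ = 0)
    (hpos : ∀ A : Finset (Fin d), A ≠ ∅ → 0 < v A) :
    (∀ A : Finset (Fin d), A ≠ ∅ →
      (ratioPot v A)⁻¹ =
        ∑ e : Fin A.card ≃ {x // x ∈ A},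
          ∏ j ∈ Finset.range A.card, (v (subPermCoal A e (j + 1)))⁻¹) ∧
    (∀ i : Fin d,
      ratioPot v Finset.univ / ratioPot v (Finset.univ.erase i) =
        (∑ e : Fin (Finset.univ.erase i).card ≃ {x // x ∈ Finset.univ.erase i},
            ∏ j ∈ Finset.range (d - 1), (v (subPermCoal (Finset.univ.erase i) e (j + 1)))⁻¹) /
        (∑ e : Fin (Finset.univ : Finset (Fin d)).card ≃
              {x // x ∈ (Finset.univ : Finset (Fin d))},
            ∏ j ∈ Finset.range d, (v (subPermCoal Finset.univ e (j + 1)))⁻¹)) := by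
  constructor
  · intro A _
    exact RPAux.main v A.card A le_rfl
  · intro i
    have hd : (Finset.univ : Finset (Fin d)).card = d := Finset.card_fin d
    have he : ((Finset.univ : Finset (Fin d)).erase i).card = d - 1 := by
      rw [Finset.card_erase_of_mem (Finset.mem_univ i), hd]
    have h1 : (ratioPot v (Finset.univ : Finset (Fin d)))⁻¹ =
        ∑ e : Fin (Finset.univ : Finset (Fin d)).card ≃
            {x // x ∈ (Finset.univ : Finset (Fin d))},
          ∏ j ∈ Finset.range d, (v (subPermCoal Finset.univ e (j + 1)))⁻¹ := by
      rw [RPAux.main v _ Finset.univ le_rfl]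
      exact Finset.sum_congr rfl fun e _ => by rw [hd]
    have h2 : (ratioPot v ((Finset.univ : Finset (Fin d)).erase i))⁻¹ =
        ∑ e : Fin (Finset.univ.erase i).card ≃ {x // x ∈ Finset.univ.erase i},
          ∏ j ∈ Finset.range (d - 1), (v (subPermCoal (Finset.univ.erase i) e (j + 1)))⁻¹ := by
      rw [RPAux.main v _ (Finset.univ.erase i) le_rfl]
      exact Finset.sum_congr rfl fun e _ => by rw [he]
    rw [← h1, ← h2, div_eq_mul_inv, div_eq_mul_inv, inv_inv, mul_comm]
end

section
/- Let (D,v) be a positive cooperative game. Then the proportional values are the random order model allocation associated with the probability mass function p(π) = L(π)/Σ_{σ∈S_D} L(σ) on the set S_D of permutations of D, where L(π) = (Π_{j=1}^{d} v(C_j(π)))^{-1}: for every i ∈ D, PV_i(D,v) = Σ_{π∈S_D} p(π)·(v(C_{π(i)}(π)) − v(C_{π(i)−1}(π))). -/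
open Finset

/-- `C_j(σ)`: the coalition made of the first `j` players in the ordering `σ` of `D`
(the player in position `k` of the ordering `σ` is `σ k`, positions being `0`-indexed;
the `1`-indexed position of player `i` is hence `(σ.symm i : ℕ) + 1`). -/
def permCoal {d : ℕ} (σ : Equiv.Perm (Fin d)) (j : ℕ) : Finset (Fin d) :=
  (Finset.univ.filter (fun k : Fin d => (k : ℕ) < j)).image σ

/-- `L(π) = (Π_{j=1}^{d} v(C_j(π)))⁻¹`. -/
noncomputable def Lweight {d : ℕ} (v : Finset (Fin d) → ℝ) (σ : Equiv.Perm (Fin d)) : ℝ :=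
  (∏ j ∈ Finset.range d, v (permCoal σ (j + 1)))⁻¹


section Aux
variable {d : ℕ} (v : Finset (Fin d) → ℝ)

/-- product of v over prefix coalitions of a list -/
noncomputable def Plist (l : List (Fin d)) : ℝ :=
  ∏ j ∈ Finset.range l.length, v ((l.take (j + 1)).toFinset)

/-- the finset of orderings of a finset -/
noncomputable def ords (A : Finset (Fin d)) : Finset (List (Fin d)) :=
  A.toList.permutations.toFinset

lemma mem_ords {A : Finset (Fin d)} {l : List (Fin d)} :
    l ∈ ords A ↔ l.Nodup ∧ l.toFinset = A := by
  rw [ords, List.mem_toFinset, List.mem_permutations]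
  constructor
  · intro h
    refine ⟨h.nodup_iff.2 A.nodup_toList, ?_⟩
    ext x
    rw [List.mem_toFinset, h.mem_iff, ← Finset.mem_toList]
  · rintro ⟨h1, h2⟩
    exact List.perm_of_nodup_nodup_toFinset_eq h1 A.nodup_toList
      (by rw [h2, Finset.toList_toFinset])

lemma ords_empty : ords (∅ : Finset (Fin d)) = {[]} := by
  ext l
  simp [mem_ords, List.toFinset_eq_empty_iff]
  intro h; simp [h]

lemma sum_ords_split {A : Finset (Fin d)} (hA : A ≠ ∅) (F : List (Fin d) → ℝ) :
    ∑ l ∈ ords A, F l = ∑ j ∈ A.attach, ∑ l ∈ ords (A.erase j.1), F (l ++ [j.1]) := by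
  rw [Finset.sum_sigma']
  refine (Finset.sum_bij (fun p _ => p.2 ++ [p.1.1]) ?_ ?_ ?_ ?_).symm
  · rintro ⟨⟨j, hj⟩, l⟩ hp
    simp only [Finset.mem_sigma, Finset.mem_attach, true_and] at hp
    rw [mem_ords] at hp ⊢
    have hjl : j ∉ l := fun h => by
      have := hp.2 ▸ List.mem_toFinset.2 h
      exact (Finset.mem_erase.1 this).1 rfl
    constructor
    · simpa [List.nodup_append] using ⟨hp.1, fun a ha h => hjl (h ▸ ha)⟩
    · rw [List.toFinset_append, hp.2]
      simp only [List.toFinset_cons, List.toFinset_nil, insert_empty_eq]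
      rw [Finset.union_comm, ← Finset.insert_eq, Finset.insert_erase hj]
  · rintro ⟨⟨j, hj⟩, l⟩ hp ⟨⟨j', hj'⟩, l'⟩ hp' h
    simp only at h
    obtain ⟨h3, h4⟩ := List.append_inj' h rfl
    obtain rfl := h3
    simp only [List.cons.injEq] at h4
    obtain ⟨rfl, -⟩ := h4
    rfl
  · intro l hl
    rw [mem_ords] at hl
    have hne : l ≠ [] := by
      rintro rfl
      exact hA (by simpa using hl.2.symm)
    refine ⟨⟨⟨l.getLast hne, ?_⟩, l.dropLast⟩, ?_, ?_⟩
    · rw [← hl.2]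
      exact List.mem_toFinset.2 (List.getLast_mem hne)
    · have hdl : l.dropLast ++ [l.getLast hne] = l := List.dropLast_append_getLast hne
      have hnd : l.dropLast.Nodup := hl.1.sublist (List.dropLast_sublist l)
      have hlast : l.getLast hne ∉ l.dropLast := by
        intro h
        have := hl.1
        rw [← hdl, List.nodup_append] at this
        exact this.2.2 _ h _ (List.mem_singleton_self _) rfl
      simp only [Finset.mem_sigma, Finset.mem_attach, true_and]
      rw [mem_ords]
      refine ⟨hnd, ?_⟩
      have : l.toFinset = insert (l.getLast hne) l.dropLast.toFinset := by
        conv_lhs => rw [← hdl]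
        rw [List.toFinset_append]
        simp only [List.toFinset_cons, List.toFinset_nil, insert_empty_eq]
        rw [Finset.union_comm, ← Finset.insert_eq]
      rw [← hl.2, this, Finset.erase_insert (List.mem_toFinset.not.2 hlast)]
    · exact List.dropLast_append_getLast hne
  · rintro ⟨⟨j, hj⟩, l⟩ hp
    rfl

lemma Plist_append {A : Finset (Fin d)} {j : Fin d} (hj : j ∈ A) {l : List (Fin d)}
    (hl : l ∈ ords (A.erase j)) : Plist v (l ++ [j]) = Plist v l * v A := by
  rw [mem_ords] at hl
  have hlen : (l ++ [j]).length = l.length + 1 := by simp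
  rw [Plist, hlen, Finset.prod_range_succ]
  congr 1
  · rw [Plist]
    refine Finset.prod_congr rfl fun k hk => ?_
    rw [Finset.mem_range] at hk
    rw [List.take_append_of_le_length (by omega)]
  · rw [List.take_of_length_le (by simp), List.toFinset_append, hl.2]
    simp only [List.toFinset_cons, List.toFinset_nil, insert_empty_eq]
    rw [Finset.union_comm, ← Finset.insert_eq, Finset.insert_erase hj]

end Aux

section Aux2
variable {d : ℕ} (v : Finset (Fin d) → ℝ)

lemma sum_ords_Plist (A : Finset (Fin d)) :
    ∑ l ∈ ords A, (Plist v l)⁻¹ = (ratioPot v A)⁻¹ := by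
  induction A using Finset.strongInductionOn with
  | _ A ih =>
    by_cases hA : A = ∅
    · subst hA
      rw [ords_empty, ratioPot]
      simp [Plist]
    · rw [sum_ords_split hA, ratioPot, if_neg hA, mul_inv, inv_inv, Finset.mul_sum]
      refine Finset.sum_congr rfl fun j _ => ?_
      rw [← ih _ (Finset.erase_ssubset j.2), Finset.mul_sum]
      refine Finset.sum_congr rfl fun l hl => ?_
      rw [Plist_append v j.2 hl, mul_inv]
      ring

lemma erase_erase_comm (A : Finset (Fin d)) (a b : Fin d) :
    (A.erase a).erase b = (A.erase b).erase a := by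
  ext x; simp only [Finset.mem_erase]; tauto

lemma sum_ords_delta (hv0 : v ∅ = 0) (hpos : ∀ A : Finset (Fin d), A ≠ ∅ → 0 < v A)
    (A : Finset (Fin d)) (i : Fin d) (hi : i ∈ A) :
    ∑ l ∈ ords A, (Plist v l)⁻¹ *
      (v ((l.take (l.idxOf i + 1)).toFinset) - v ((l.take (l.idxOf i)).toFinset))
    = (ratioPot v (A.erase i))⁻¹ := by
  induction A using Finset.strongInductionOn with
  | _ A ih =>
  have hA : A ≠ ∅ := Finset.ne_empty_of_mem hi
  have hvA : v A ≠ 0 := (hpos A hA).ne'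
  rw [sum_ords_split hA, Finset.sum_attach A (fun j => ∑ l ∈ ords (A.erase j),
    (Plist v (l ++ [j]))⁻¹ * (v (((l ++ [j]).take ((l ++ [j]).idxOf i + 1)).toFinset)
      - v (((l ++ [j]).take ((l ++ [j]).idxOf i)).toFinset))),
    ← Finset.add_sum_erase _ _ hi]
  have hterm_i : ∑ l ∈ ords (A.erase i),
      (Plist v (l ++ [i]))⁻¹ * (v (((l ++ [i]).take ((l ++ [i]).idxOf i + 1)).toFinset)
        - v (((l ++ [i]).take ((l ++ [i]).idxOf i)).toFinset))
      = (v A)⁻¹ * ((v A - v (A.erase i)) * (ratioPot v (A.erase i))⁻¹) := by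
    have hc : ∀ l ∈ ords (A.erase i),
        (Plist v (l ++ [i]))⁻¹ * (v (((l ++ [i]).take ((l ++ [i]).idxOf i + 1)).toFinset)
          - v (((l ++ [i]).take ((l ++ [i]).idxOf i)).toFinset))
        = (v A)⁻¹ * ((v A - v (A.erase i)) * (Plist v l)⁻¹) := by
      intro l hl
      have hl' := mem_ords.1 hl
      have hil : i ∉ l := fun h =>
        (Finset.mem_erase.1 (hl'.2 ▸ List.mem_toFinset.2 h)).1 rfl
      have hidx : (l ++ [i]).idxOf i = l.length := by
        rw [List.idxOf_append_of_notMem hil]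
        simp
      rw [hidx, List.take_of_length_le (by simp),
        List.take_append_of_le_length (le_refl _), List.take_length,
        List.toFinset_append, hl'.2]
      simp only [List.toFinset_cons, List.toFinset_nil, insert_empty_eq]
      rw [Finset.union_comm, ← Finset.insert_eq, Finset.insert_erase hi,
        Plist_append v hi hl, mul_inv]
      ring
    rw [Finset.sum_congr rfl hc, ← Finset.mul_sum, ← Finset.mul_sum, sum_ords_Plist]
  have hterm_j : ∀ j ∈ A.erase i, ∑ l ∈ ords (A.erase j),
      (Plist v (l ++ [j]))⁻¹ * (v (((l ++ [j]).take ((l ++ [j]).idxOf i + 1)).toFinset)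
        - v (((l ++ [j]).take ((l ++ [j]).idxOf i)).toFinset))
      = (v A)⁻¹ * (ratioPot v ((A.erase i).erase j))⁻¹ := by
    intro j hj
    obtain ⟨hji, hjA⟩ := Finset.mem_erase.1 hj
    have hiA : i ∈ A.erase j := Finset.mem_erase.2 ⟨fun h => hji h.symm, hi⟩
    have hc : ∀ l ∈ ords (A.erase j),
        (Plist v (l ++ [j]))⁻¹ * (v (((l ++ [j]).take ((l ++ [j]).idxOf i + 1)).toFinset)
          - v (((l ++ [j]).take ((l ++ [j]).idxOf i)).toFinset))
        = (v A)⁻¹ * ((Plist v l)⁻¹ *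
            (v ((l.take (l.idxOf i + 1)).toFinset) - v ((l.take (l.idxOf i)).toFinset))) := by
      intro l hl
      have hl' := mem_ords.1 hl
      have hil : i ∈ l := List.mem_toFinset.1 (hl'.2 ▸ hiA)
      have hidx : (l ++ [j]).idxOf i = l.idxOf i := List.idxOf_append_of_mem hil
      have hlt : l.idxOf i < l.length := List.idxOf_lt_length_iff.2 hil
      rw [hidx, List.take_append_of_le_length (by omega),
        List.take_append_of_le_length (by omega),
        Plist_append v hjA hl, mul_inv]
      ring
    rw [Finset.sum_congr rfl hc, ← Finset.mul_sum,
      ih _ (Finset.erase_ssubset hjA) hiA, erase_erase_comm]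
  rw [hterm_i, Finset.sum_congr rfl hterm_j, ← Finset.mul_sum]
  have hsum : ∑ j ∈ A.erase i, (ratioPot v ((A.erase i).erase j))⁻¹
      = v (A.erase i) * (ratioPot v (A.erase i))⁻¹ := by
    by_cases h : A.erase i = ∅
    · simp [h, hv0]
    · rw [ratioPot, if_neg h, mul_inv, inv_inv, ← mul_assoc,
        mul_inv_cancel₀ (hpos _ h).ne', one_mul]
      exact (Finset.sum_attach (A.erase i)
        (fun j => (ratioPot v ((A.erase i).erase j))⁻¹)).symm
  rw [hsum, ← mul_add, ← add_mul, sub_add_cancel, inv_mul_cancel_left₀ hvA]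

lemma permCoal_eq (σ : Equiv.Perm (Fin d)) (j : ℕ) :
    permCoal σ j = ((List.ofFn σ).take j).toFinset := by
  ext x
  simp only [permCoal, Finset.mem_image, Finset.mem_filter, Finset.mem_univ, true_and,
    List.mem_toFinset, List.mem_take_iff_getElem, List.getElem_ofFn, List.length_ofFn]
  constructor
  · rintro ⟨k, hk, rfl⟩
    exact ⟨(k : ℕ), lt_min hk k.2, by simp⟩
  · rintro ⟨k, hk, rfl⟩
    exact ⟨⟨k, (lt_min_iff.1 hk).2⟩, (lt_min_iff.1 hk).1, rfl⟩

lemma indexOf_ofFn (σ : Equiv.Perm (Fin d)) (i : Fin d) :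
    (List.ofFn σ).idxOf i = (σ.symm i : ℕ) := by
  have hnd : (List.ofFn σ).Nodup := List.nodup_ofFn.mpr σ.injective
  have h1 : (List.ofFn σ)[(σ.symm i : ℕ)]'(by simp) = i := by simp
  conv_lhs => rw [← h1]
  exact hnd.idxOf_getElem _ _

lemma Lweight_eq (σ : Equiv.Perm (Fin d)) :
    Lweight v σ = (Plist v (List.ofFn σ))⁻¹ := by
  rw [Lweight, Plist, List.length_ofFn]
  congr 1
  exact Finset.prod_congr rfl fun j _ => by rw [permCoal_eq]

lemma sum_perm_eq_sum_ords (G : List (Fin d) → ℝ) :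
    ∑ σ : Equiv.Perm (Fin d), G (List.ofFn σ) = ∑ l ∈ ords Finset.univ, G l := by
  refine Finset.sum_bij (fun σ _ => List.ofFn σ) ?_ ?_ ?_ ?_
  · intro σ _
    rw [mem_ords]
    refine ⟨List.nodup_ofFn.mpr σ.injective, ?_⟩
    ext x
    simpa [List.mem_ofFn] using σ.surjective x
  · intro σ _ τ _ h
    exact Equiv.ext (congrFun (List.ofFn_inj.1 h))
  · intro l hl
    rw [mem_ords] at hl
    have hlen : l.length = d := by
      rw [← List.toFinset_card_of_nodup hl.1, hl.2, Finset.card_univ, Fintype.card_fin]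
    have hinj : Function.Injective
        (fun k : Fin d => l.get ⟨(k : ℕ), by rw [hlen]; exact k.2⟩) := by
      intro a b hab
      have := List.nodup_iff_injective_get.1 hl.1 hab
      simpa [Fin.ext_iff] using this
    refine ⟨Equiv.ofBijective _ (Finite.injective_iff_bijective.1 hinj),
      Finset.mem_univ _, ?_⟩
    refine List.ext_getElem (by simp [hlen]) fun k h1 h2 => ?_
    simp [List.getElem_ofFn, Equiv.ofBijective, List.get]
  · intros
    rfl

end Aux2

/-- for a positive cooperative game, the proportional values
`PV_i(D,v) = R(D,v)/R(D\{i},v)` are the random order model allocation associated with the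
probability mass function `p(π) = L(π)/Σ_{σ∈S_D} L(σ)`. -/
theorem pv_eq_random_order_model {d : ℕ} (v : Finset (Fin d) → ℝ) (hv0 : v ∅ = 0)
    (hpos : ∀ A : Finset (Fin d), A ≠ ∅ → 0 < v A) (i : Fin d) :
    ratioPot v Finset.univ / ratioPot v (Finset.univ.erase i) =
      ∑ σ : Equiv.Perm (Fin d),
        (Lweight v σ / ∑ τ : Equiv.Perm (Fin d), Lweight v τ) *
          (v (permCoal σ ((σ.symm i : ℕ) + 1)) - v (permCoal σ (σ.symm i))) := by
  have key1 : ∑ τ : Equiv.Perm (Fin d), Lweight v τ = (ratioPot v Finset.univ)⁻¹ := by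
    rw [← sum_ords_Plist v Finset.univ, ← sum_perm_eq_sum_ords (fun l => (Plist v l)⁻¹)]
    exact Finset.sum_congr rfl fun σ _ => Lweight_eq v σ
  have key2 : ∑ σ : Equiv.Perm (Fin d),
      Lweight v σ * (v (permCoal σ ((σ.symm i : ℕ) + 1)) - v (permCoal σ (σ.symm i)))
      = (ratioPot v (Finset.univ.erase i))⁻¹ := by
    rw [← sum_ords_delta v hv0 hpos Finset.univ i (Finset.mem_univ i),
      ← sum_perm_eq_sum_ords (fun l => (Plist v l)⁻¹ *
        (v ((l.take (l.idxOf i + 1)).toFinset) - v ((l.take (l.idxOf i)).toFinset)))]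
    refine Finset.sum_congr rfl fun σ _ => ?_
    rw [Lweight_eq v σ, indexOf_ofFn σ i, permCoal_eq σ ((σ.symm i : ℕ) + 1),
      permCoal_eq σ (σ.symm i : ℕ)]
  simp_rw [div_mul_eq_mul_div, ← Finset.sum_div]
  rw [key1, key2, div_eq_mul_inv, div_eq_mul_inv, inv_inv, mul_comm]
end

section
/- Let (D,v) be a nonnegative monotonic cooperative game with v(D) > 0, and suppose there is a nonempty proper subset E ⊊ D such that v(B) = 0 for every B ⊆ E, and v(A) > 0 for every A ⊆ D with |A| ≥ |E| and A ≠ E. Then the extended proportional values satisfy PV⁰_i = 0 for every i ∈ E and PV⁰_j > 0 for every j ∈ D\E. -/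
open Finset

lemma ratioPot_pos_s5 {d : ℕ} (w : Finset (Fin d) → ℝ) (A : Finset (Fin d))
    (h : ∀ B ⊆ A, B.Nonempty → 0 < w B) : 0 < ratioPot w A := by
  induction A using Finset.strongInduction with
  | _ A ih =>
    rw [ratioPot]
    split
    · norm_num
    · rename_i hA
      apply mul_pos (h A (subset_refl A) (Finset.nonempty_iff_ne_empty.2 hA))
      apply inv_pos.2
      apply Finset.sum_pos
      · intro j _
        exact inv_pos.2 (ih _ (Finset.erase_ssubset j.2)
          (fun B hB hBne => h B (hB.trans (Finset.erase_subset _ _)) hBne))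
      · exact Finset.attach_nonempty_iff.2 (Finset.nonempty_iff_ne_empty.2 hA)

/-- For a nonnegative monotonic cooperative game `(D, v)` with `v(D) > 0`, if
`E ⊊ D` is nonempty, `v(B) = 0` for every `B ⊆ E`, and `v(A) > 0` for every `A ⊆ D` with
`|A| ≥ |E|` and `A ≠ E`, then `PV⁰_i = 0` for every `i ∈ E` and `PV⁰_j > 0` for every
`j ∈ D\E`. -/
theorem pv0_exogeneity {d : ℕ} (v : Finset (Fin d) → ℝ) (hv0 : v ∅ = 0)
    (hnonneg : ∀ A : Finset (Fin d), 0 ≤ v A)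
    (hmono : ∀ T A : Finset (Fin d), T ⊆ A → v T ≤ v A)
    (hD : 0 < v Finset.univ)
    (E : Finset (Fin d)) (hEne : E.Nonempty) (hEproper : E ⊂ Finset.univ)
    (hnull : ∀ B ⊆ E, v B = 0)
    (hpos : ∀ A : Finset (Fin d), E.card ≤ A.card → A ≠ E → 0 < v A) :
    (∀ i ∈ E, PV0 v i = 0) ∧ (∀ j ∉ E, 0 < PV0 v j) := by
  classical
  have hnullmem : ∀ A : Finset (Fin d), A ∈ nullCoalitions v ↔ v A = 0 := by
    intro A; simp [nullCoalitions]
  have hcardle : ∀ A ∈ nullCoalitions v, A.card ≤ E.card := by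
    intro A hA
    by_contra hlt
    push_neg at hlt
    have hne : A ≠ E := fun h => by simp [h] at hlt
    exact absurd ((hnullmem A).1 hA) (ne_of_gt (hpos A hlt.le hne))
  have hkmax : kmax v = E.card := by
    apply le_antisymm
    · exact Finset.sup_le (fun A hA => hcardle A hA)
    · exact Finset.le_sup ((hnullmem E).2 (hnull E (subset_refl E)))
  have hmax : maxNullCoalitions v = {E} := by
    ext A
    simp only [maxNullCoalitions, Finset.mem_filter, hnullmem, hkmax, Finset.mem_singleton]
    constructor
    · rintro ⟨h0, hc⟩
      by_contra hne
      exact absurd h0 (ne_of_gt (hpos A (le_of_eq hc.symm) hne))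
    · intro h; subst h; exact ⟨hnull _ (subset_refl _), rfl⟩
  have hwpos : ∀ B ⊆ (Finset.univ \ E : Finset (Fin d)), B.Nonempty → 0 < v (E ∪ B) := by
    intro B hB hBne
    apply hpos
    · exact Finset.card_le_card Finset.subset_union_left
    · intro h
      obtain ⟨x, hx⟩ := hBne
      have hxE : x ∈ E := h ▸ (Finset.mem_union_right E hx)
      have := hB hx
      simp at this
      exact this hxE
  constructor
  · intro i hi
    rw [PV0, if_pos]
    intro A hA
    rw [hmax, Finset.mem_singleton] at hA
    exact hA ▸ hi
  · intro j hj
    rw [PV0, if_neg]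
    · have havoid : maxNullCoalitionsAvoiding v j = {E} := by
        rw [maxNullCoalitionsAvoiding, hmax, Finset.filter_singleton, if_pos hj]
      rw [havoid, hmax, Finset.sum_singleton, Finset.sum_singleton]
      apply div_pos
      · apply inv_pos.2
        apply ratioPot_pos_s5
        intro B hB hBne
        exact hwpos B (hB.trans (Finset.sdiff_subset_sdiff (Finset.erase_subset _ _) (subset_refl E))) hBne
      · apply inv_pos.2
        apply ratioPot_pos_s5
        intro B hB hBne
        exact hwpos B hB hBne
    · rw [hmax]
      push_neg
      exact ⟨E, Finset.mem_singleton_self E, hj⟩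
end

section
/- Let (Ω,ℱ,ℙ) be a probability space, X_1,…,X_d real random variables, Y ∈ L²(ℙ) with Var(Y) > 0, and D = {1,…,d}. Suppose E ⊊ D is nonempty, X_E is L²-exogenous, and for every A ⊆ D with |A| ≥ |E| and A ≠ E there is no square-integrable σ(X_{D\A})-measurable random variable f with Y = f almost surely. Then the proportional marginal effects satisfy PME_i = 0 for every i ∈ E and PME_j > 0 for every j ∈ D\E. -/
open MeasureTheory ProbabilityTheory

/-- `σ(X_A)`: the σ-algebra generated by the random variables `(X_i)_{i ∈ A}`
(for `A = ∅` this is the trivial σ-algebra `⊥`). -/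
noncomputable def sigmaGen {Ω : Type*} {d : ℕ} (X : Fin d → Ω → ℝ) (A : Finset (Fin d)) :
    MeasurableSpace Ω :=
  ⨆ i ∈ A, MeasurableSpace.comap (X i) inferInstance

/-- `E[Var(Y | m)]`: the expectation of the conditional variance
`Var(Y | m) = E[(Y − E[Y | m])² | m]` of `Y` given the σ-algebra `m`. -/
noncomputable def meanCondVar {Ω : Type*} [mΩ : MeasurableSpace Ω] (μ : Measure Ω)
    (m : MeasurableSpace Ω) (Y : Ω → ℝ) : ℝ :=
  ∫ ω, (μ[fun ω' => (Y ω' - (μ[Y|m]) ω') ^ 2|m]) ω ∂μ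

/-- `S^T_A = E[Var(Y | σ(X_Ā))]/Var(Y)`: the total Sobol' index of the coalition `A`. -/
noncomputable def totalSobol {Ω : Type*} [mΩ : MeasurableSpace Ω] (μ : Measure Ω) {d : ℕ}
    (X : Fin d → Ω → ℝ) (Y : Ω → ℝ) (A : Finset (Fin d)) : ℝ :=
  meanCondVar μ (sigmaGen X (Finset.univ \ A)) Y / variance Y μ

open Finset

-- AUX LEMMAS

lemma my_sigmaGen_le {Ω : Type*} {mΩ : MeasurableSpace Ω} {d : ℕ} {X : Fin d → Ω → ℝ}
    (hX : ∀ i, Measurable (X i)) (A : Finset (Fin d)) : sigmaGen X A ≤ mΩ := by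
  refine iSup_le fun i => iSup_le fun _ => ?_
  exact (hX i).comap_le

lemma my_memℒp_two_condexp {Ω : Type*} {mΩ : MeasurableSpace Ω} {μ : Measure Ω}
    [IsProbabilityMeasure μ] {m : MeasurableSpace Ω} {Y : Ω → ℝ}
    (hm : m ≤ mΩ) (hY : MemLp Y 2 μ) : MemLp (μ[Y|m]) 2 μ := by
  haveI : SigmaFinite (μ.trim hm) := inferInstance
  set g : Ω → ℝ := ((condExpL2 ℝ ℝ hm (hY.toLp Y) : Ω →₂[μ] ℝ) : Ω → ℝ) with hg
  have hgmem : MemLp g 2 μ := Lp.memLp _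
  have hgint : Integrable g μ := hgmem.integrable one_le_two
  have hYint : Integrable Y μ := hY.integrable one_le_two
  have heq : g =ᵐ[μ] μ[Y|m] := by
    refine ae_eq_condExp_of_forall_setIntegral_eq (μ := μ) hm hYint
      (fun s _ _ => hgint.restrict)
      (fun s hs hμs => ?_) (lpMeas.aestronglyMeasurable _)
    rw [hg, integral_condExpL2_eq hm (hY.toLp Y) hs hμs.ne]
    exact integral_congr_ae (ae_restrict_of_ae (hY.coeFn_toLp))
  exact hgmem.ae_eq heq

lemma my_meanCondVar_zero_iff {Ω : Type*} {mΩ : MeasurableSpace Ω} {μ : Measure Ω}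
    [IsProbabilityMeasure μ] {m : MeasurableSpace Ω} (hm : m ≤ mΩ)
    {Y : Ω → ℝ} (hY : MemLp Y 2 μ) :
    meanCondVar (mΩ := mΩ) μ m Y = 0 ↔ ∃ f : Ω → ℝ, MemLp f 2 μ ∧
      Measurable[m] f ∧ Y =ᵐ[μ] f := by
  haveI : SigmaFinite (μ.trim hm) := inferInstance
  have hg2 : MemLp (μ[Y|m]) 2 μ := my_memℒp_two_condexp hm hY
  have hint : Integrable (fun ω => (Y ω - (μ[Y|m]) ω) ^ 2) μ := (hY.sub hg2).integrable_sq
  have hmcv : meanCondVar (mΩ := mΩ) μ m Y = ∫ ω, (Y ω - (μ[Y|m]) ω) ^ 2 ∂μ := integral_condExp hm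
  constructor
  · intro h0
    rw [hmcv] at h0
    have hae := (integral_eq_zero_iff_of_nonneg_ae
      (Filter.Eventually.of_forall fun ω => sq_nonneg _) hint).mp h0
    have hYg : Y =ᵐ[μ] μ[Y|m] := by
      filter_upwards [hae] with ω hω
      have h2 : (Y ω - (μ[Y|m]) ω) ^ 2 = 0 := hω
      nlinarith [h2]
    exact ⟨μ[Y|m], hg2, stronglyMeasurable_condExp.measurable, hYg⟩
  · rintro ⟨f, hf2, hfm, hYf⟩
    have hcf : μ[f|m] = f :=
      condExp_of_stronglyMeasurable hm hfm.stronglyMeasurable (hf2.integrable one_le_two)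
    have hgf : μ[Y|m] =ᵐ[μ] f := (condExp_congr_ae hYf).trans (by rw [hcf])
    have hzero : (fun ω => (Y ω - (μ[Y|m]) ω) ^ 2) =ᵐ[μ] (fun _ => (0:ℝ)) := by
      filter_upwards [hYf, hgf] with ω h1 h2
      simp [h1, h2]
    rw [hmcv, integral_congr_ae hzero, integral_const]
    simp

lemma my_totalSobol_zero_iff {Ω : Type*} {mΩ : MeasurableSpace Ω} {μ : Measure Ω}
    [IsProbabilityMeasure μ] {d : ℕ} {X : Fin d → Ω → ℝ} (hX : ∀ i, Measurable (X i))
    {Y : Ω → ℝ} (hY : MemLp Y 2 μ) (hvar : 0 < variance Y μ) (A : Finset (Fin d)) :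
    totalSobol μ X Y A = 0 ↔ ∃ f : Ω → ℝ, MemLp f 2 μ ∧
      Measurable[sigmaGen X (Finset.univ \ A)] f ∧ Y =ᵐ[μ] f := by
  rw [← my_meanCondVar_zero_iff (my_sigmaGen_le hX (Finset.univ \ A)) hY]
  unfold totalSobol
  constructor
  · intro h
    rcases div_eq_zero_iff.mp h with h' | h'
    · exact h'
    · exact absurd h' hvar.ne'
  · intro h
    rw [h, zero_div]

lemma my_totalSobol_nonneg {Ω : Type*} {mΩ : MeasurableSpace Ω} {μ : Measure Ω}
    [IsProbabilityMeasure μ] {d : ℕ} {X : Fin d → Ω → ℝ} (hX : ∀ i, Measurable (X i))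
    {Y : Ω → ℝ} (hY : MemLp Y 2 μ) (A : Finset (Fin d)) : 0 ≤ totalSobol μ X Y A := by
  have hm : sigmaGen X (Finset.univ \ A) ≤ mΩ := my_sigmaGen_le hX _
  haveI : SigmaFinite (μ.trim hm) := inferInstance
  have hmcv : meanCondVar μ (sigmaGen X (Finset.univ \ A)) Y
      = ∫ ω, (Y ω - (μ[Y|sigmaGen X (Finset.univ \ A)]) ω) ^ 2 ∂μ := integral_condExp hm
  refine div_nonneg ?_ (variance_nonneg _ _)
  rw [hmcv]
  exact integral_nonneg fun ω => sq_nonneg _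

lemma my_ratioPot_pos {d : ℕ} (w : Finset (Fin d) → ℝ) (A : Finset (Fin d))
    (hw : ∀ B ⊆ A, B.Nonempty → 0 < w B) : 0 < ratioPot w A := by
  induction A using Finset.strongInduction with
  | _ A ih =>
    rw [ratioPot]
    split
    · exact one_pos
    · rename_i hAne
      have hA : A.Nonempty := nonempty_iff_ne_empty.mpr hAne
      refine mul_pos (hw A Finset.Subset.rfl hA) (inv_pos.mpr (Finset.sum_pos ?_ ?_))
      · intro j _
        refine inv_pos.mpr (ih (A.erase j.1) (Finset.erase_ssubset j.2) ?_)
        exact fun B hB hBne => hw B (hB.trans (Finset.erase_subset _ _)) hBne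
      · exact Finset.attach_nonempty_iff.mpr hA

/-- if `E ⊊ D` is nonempty, `X_E` is `L²`-exogenous, and no coalition `A ≠ E`
with `|A| ≥ |E|` admits a square-integrable `σ(X_{D\A})`-measurable representative of `Y`,
then the proportional marginal effects `PME_i = PV⁰_i(D, S^T)` vanish on `E` and are
positive outside of `E`. -/
theorem pme_exogeneity {Ω : Type*} {mΩ : MeasurableSpace Ω} (μ : Measure Ω)
    [IsProbabilityMeasure μ] {d : ℕ} (X : Fin d → Ω → ℝ) (hX : ∀ i, Measurable (X i))
    (Y : Ω → ℝ) (hY : MemLp Y 2 μ) (hvar : 0 < variance Y μ)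
    (E : Finset (Fin d)) (hEne : E.Nonempty) (hEproper : E ⊂ Finset.univ)
    (hexo : ∀ B ⊆ E, ∃ f : Ω → ℝ, MemLp f 2 μ ∧
      Measurable[sigmaGen X (Finset.univ \ B)] f ∧ Y =ᵐ[μ] f)
    (hlargest : ∀ A : Finset (Fin d), E.card ≤ A.card → A ≠ E →
      ¬∃ f : Ω → ℝ, MemLp f 2 μ ∧ Measurable[sigmaGen X (Finset.univ \ A)] f ∧ Y =ᵐ[μ] f) :
    (∀ i ∈ E, PV0 (totalSobol μ X Y) i = 0) ∧
    (∀ j ∉ E, 0 < PV0 (totalSobol μ X Y) j) := by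
  classical
  set v : Finset (Fin d) → ℝ := totalSobol μ X Y with hv
  have hziff : ∀ A, v A = 0 ↔ ∃ f : Ω → ℝ, MemLp f 2 μ ∧
      Measurable[sigmaGen X (Finset.univ \ A)] f ∧ Y =ᵐ[μ] f :=
    fun A => my_totalSobol_zero_iff hX hY hvar A
  have h0 : ∀ B ⊆ E, v B = 0 := fun B hB => (hziff B).mpr (hexo B hB)
  have hpos : ∀ A, E.card ≤ A.card → A ≠ E → 0 < v A := by
    intro A hc hne
    rcases lt_or_eq_of_le (my_totalSobol_nonneg hX hY A) with h | h
    · exact h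
    · exact absurd ((hziff A).mp h.symm) (hlargest A hc hne)
  have hEnull : v E = 0 := h0 E Finset.Subset.rfl
  have hEmem : E ∈ nullCoalitions v := by
    simp [nullCoalitions, hEnull]
  have hk : kmax v = E.card := by
    refine le_antisymm (Finset.sup_le fun A hA => ?_) (Finset.le_sup hEmem)
    by_contra h
    push_neg at h
    have hAne : A ≠ E := by
      intro hAE; subst hAE; exact lt_irrefl _ h
    have := hpos A h.le hAne
    have hA0 : v A = 0 := by simpa [nullCoalitions] using hA
    linarith
  have hK : maxNullCoalitions v = {E} := by
    ext A
    simp only [maxNullCoalitions, nullCoalitions, Finset.mem_filter, Finset.mem_univ,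
      true_and, Finset.mem_singleton, hk]
    constructor
    · rintro ⟨hA0, hAc⟩
      by_contra hne
      exact (hpos A hAc.ge hne).ne' hA0
    · rintro rfl
      exact ⟨hEnull, rfl⟩
  have hw : ∀ B ⊆ Finset.univ \ E, B.Nonempty → 0 < v (E ∪ B) := by
    intro B hB hBne
    have hdisj : Disjoint E B := by
      refine Finset.disjoint_left.mpr fun a ha hab => ?_
      exact (Finset.mem_sdiff.mp (hB hab)).2 ha
    have hcard : (E ∪ B).card = E.card + B.card := Finset.card_union_of_disjoint hdisj
    refine hpos (E ∪ B) (by omega) ?_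
    intro hEq
    have : (E ∪ B).card = E.card := by rw [hEq]
    have hB1 : 0 < B.card := Finset.card_pos.mpr hBne
    omega
  constructor
  · intro i hi
    rw [PV0, if_pos]
    intro A hA
    rw [hK, Finset.mem_singleton] at hA
    subst hA
    exact hi
  · intro j hj
    rw [PV0, if_neg]
    swap
    · push_neg
      exact ⟨E, by rw [hK]; exact Finset.mem_singleton_self E, hj⟩
    have hKj : maxNullCoalitionsAvoiding v j = {E} := by
      rw [maxNullCoalitionsAvoiding, hK, Finset.filter_singleton, if_pos hj]
    rw [hKj, hK, Finset.sum_singleton, Finset.sum_singleton]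
    have h1 : 0 < ratioPot (fun B => v (E ∪ B)) ((Finset.univ.erase j) \ E) := by
      refine my_ratioPot_pos _ _ fun B hB hBne => hw B ?_ hBne
      refine hB.trans (Finset.sdiff_subset_sdiff (Finset.erase_subset _ _) Finset.Subset.rfl)
    have h2 : 0 < ratioPot (fun B => v (E ∪ B)) (Finset.univ \ E) :=
      my_ratioPot_pos _ _ fun B hB hBne => hw B hB hBne
    exact div_pos (inv_pos.mpr h1) (inv_pos.mpr h2)
end

section
/- Let (D,v) be a cooperative game. For every player i ∈ D, the coalition-weighted Shapley formula equals the permutation-average formula: (1/d)·Σ_{A ⊆ D\{i}} C(d−1,|A|)^{-1}·(v(A∪{i}) − v(A)) = (1/d!)·Σ_{π∈S_D} (v(C_{π(i)}(π)) − v(C_{π(i)−1}(π))), where S_D is the set of permutations of D and C(d−1,|A|) is the binomial coefficient. -/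
open Finset

/-- Permutations respecting fibers of labelings `p`, `q` correspond to families of
bijections between fibers. -/
def permBlocksEquiv {α β : Type*} [DecidableEq β] (p q : α → β) :
    {σ : Equiv.Perm α // ∀ x, q (σ x) = p x} ≃ ∀ b, ({x // p x = b} ≃ {x // q x = b}) where
  toFun := fun ⟨σ, h⟩ b =>
    { toFun := fun x => ⟨σ x, by rw [h]; exact x.2⟩
      invFun := fun y => ⟨σ.symm y, by
        have := h (σ.symm y); rw [Equiv.apply_symm_apply] at this; rw [← this]; exact y.2⟩
      left_inv := fun x => by simp
      right_inv := fun y => by simp }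
  invFun := fun E =>
    ⟨(Equiv.sigmaFiberEquiv p).symm.trans ((Equiv.sigmaCongrRight E).trans
        (Equiv.sigmaFiberEquiv q)), by
      intro x
      simp only [Equiv.trans_apply, Equiv.sigmaFiberEquiv, Equiv.sigmaCongrRight,
        Equiv.coe_fn_symm_mk, Equiv.coe_fn_mk]
      exact (E (p x) ⟨x, rfl⟩).2⟩
  left_inv := fun ⟨σ, h⟩ => by
    ext x
    simp [Equiv.sigmaFiberEquiv, Equiv.sigmaCongrRight]
  right_inv := fun E => by
    funext b
    ext x
    obtain ⟨xv, hx⟩ := x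
    subst hx
    simp [Equiv.sigmaFiberEquiv, Equiv.sigmaCongrRight]

lemma card_perm_blocks {α β : Type*} [Fintype α] [DecidableEq α] [Fintype β] [DecidableEq β]
    (p q : α → β) (h : ∀ b, Fintype.card {x // p x = b} = Fintype.card {x // q x = b}) :
    Fintype.card {σ : Equiv.Perm α // ∀ x, q (σ x) = p x}
      = ∏ b, (Fintype.card {x // p x = b}).factorial := by
  rw [Fintype.card_congr (permBlocksEquiv p q), Fintype.card_pi]
  exact Finset.prod_congr rfl fun b _ => Fintype.card_equiv (Fintype.equivOfCardEq (h b))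

lemma filter_lt_eq_Iio {d : ℕ} (a : Fin d) :
    (Finset.univ.filter (fun k : Fin d => (k : ℕ) < (a : ℕ))) = Finset.Iio a := by
  ext k
  simp only [Finset.mem_filter, Finset.mem_univ, true_and, Finset.mem_Iio, Fin.lt_def]

lemma permCoal_pos_card {d : ℕ} (σ : Equiv.Perm (Fin d)) (a : Fin d) :
    (permCoal σ (a : ℕ)).card = (a : ℕ) := by
  rw [permCoal, Finset.card_image_of_injective _ σ.injective, filter_lt_eq_Iio, Fin.card_Iio]

lemma mem_permCoal_pos {d : ℕ} (σ : Equiv.Perm (Fin d)) (j : ℕ) (y : Fin d) :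
    y ∈ permCoal σ j ↔ (σ.symm y : ℕ) < j := by
  simp only [permCoal, Finset.mem_image, Finset.mem_filter, Finset.mem_univ, true_and]
  constructor
  · rintro ⟨k, hk, rfl⟩; simpa using hk
  · intro h; exact ⟨σ.symm y, h, σ.apply_symm_apply y⟩

lemma not_mem_pred {d : ℕ} (σ : Equiv.Perm (Fin d)) (i : Fin d) :
    i ∉ permCoal σ (σ.symm i : ℕ) := by
  rw [mem_permCoal_pos]; omega

lemma succ_pred {d : ℕ} (σ : Equiv.Perm (Fin d)) (i : Fin d) :
    permCoal σ ((σ.symm i : ℕ) + 1) = insert i (permCoal σ (σ.symm i : ℕ)) := by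
  ext y
  rw [Finset.mem_insert, mem_permCoal_pos, mem_permCoal_pos]
  constructor
  · intro hk
    rcases Nat.lt_succ_iff_lt_or_eq.mp hk with h | h
    · right; exact h
    · left
      have : σ.symm y = σ.symm i := Fin.ext h
      have := congrArg σ this
      simpa using this
  · rintro (rfl | h) <;> omega

/-- the coalition-weighted Shapley formula equals the permutation-average
formula. -/
theorem shapley_coalition_eq_permutation {d : ℕ} (v : Finset (Fin d) → ℝ) (hv0 : v ∅ = 0)
    (i : Fin d) :
    (1 / d : ℝ) * ∑ A ∈ (Finset.univ.erase i).powerset,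
        (((d - 1).choose A.card : ℝ))⁻¹ * (v (insert i A) - v A) =
      (1 / (d.factorial : ℝ)) * ∑ σ : Equiv.Perm (Fin d),
        (v (permCoal σ ((σ.symm i : ℕ) + 1)) - v (permCoal σ (σ.symm i))) := by
  classical
  have hd : 0 < d := i.pos
  -- every predecessor set lands in the powerset
  have hmaps : ∀ σ : Equiv.Perm (Fin d), σ ∈ (Finset.univ : Finset (Equiv.Perm (Fin d))) →
      permCoal σ (σ.symm i : ℕ) ∈ (Finset.univ.erase i).powerset := by
    intro σ _
    rw [Finset.mem_powerset]
    intro y hy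
    rw [Finset.mem_erase]
    refine ⟨?_, Finset.mem_univ y⟩
    rintro rfl
    exact not_mem_pred σ _ hy
  -- fiber cardinality
  have hfiber : ∀ A ∈ (Finset.univ.erase i).powerset,
      (Finset.univ.filter
          (fun σ : Equiv.Perm (Fin d) => permCoal σ (σ.symm i : ℕ) = A)).card
        = A.card.factorial * (d - 1 - A.card).factorial := by
    intro A hA
    rw [Finset.mem_powerset] at hA
    have hiA : i ∉ A := fun h => (Finset.mem_erase.mp (hA h)).1 rfl
    have hAcard : A.card ≤ d - 1 := by
      have := Finset.card_le_card hA
      rwa [Finset.card_erase_of_mem (Finset.mem_univ i), Finset.card_univ,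
        Fintype.card_fin] at this
    have hAd : A.card < d := by omega
    set j : Fin d := ⟨A.card, hAd⟩ with hj
    set L : Finset (Fin d) := Finset.univ.filter (fun k : Fin d => (k : ℕ) < A.card) with hL
    have hjL : j ∉ L := by simp [hL, hj]
    have hLcard : L.card = A.card := by
      have h1 : L = Finset.Iio j := by rw [hL, ← filter_lt_eq_Iio j]
      rw [h1, Fin.card_Iio]
    set p : Fin d → Fin 3 := fun x => if x ∈ L then 0 else if x = j then 1 else 2 with hp
    set q : Fin d → Fin 3 := fun y => if y ∈ A then 0 else if y = i then 1 else 2 with hq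
    -- the fiber condition is the block condition
    have hcond : ∀ σ : Equiv.Perm (Fin d),
        permCoal σ (σ.symm i : ℕ) = A ↔ ∀ x, q (σ x) = p x := by
      intro σ
      constructor
      · intro hPA
        have hpos : (σ.symm i : ℕ) = A.card := by
          rw [← hPA]; exact (permCoal_pos_card σ (σ.symm i)).symm
        have hsj : σ.symm i = j := Fin.ext hpos
        have hji : σ j = i := by rw [← hsj, σ.apply_symm_apply]
        intro x
        by_cases hx : x ∈ L
        · have hxa : σ x ∈ A := by
            rw [← hPA, mem_permCoal_pos, σ.symm_apply_apply, hpos]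
            rw [hL, Finset.mem_filter] at hx
            exact hx.2
          simp [hp, hq, hx, hxa]
        · by_cases hxj : x = j
          · subst hxj
            simp [hp, hq, hjL, hji, hiA]
          · have hxa : σ x ∉ A := by
              rw [← hPA, mem_permCoal_pos, σ.symm_apply_apply, hpos]
              rw [hL, Finset.mem_filter] at hx
              push_neg at hx
              have := hx (Finset.mem_univ x)
              omega
            have hxi : σ x ≠ i := by
              intro h
              apply hxj
              have : x = σ.symm i := by rw [← h, σ.symm_apply_apply]
              rw [this, hsj]
            simp [hp, hq, hx, hxj, hxa, hxi]
      · intro h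
        have hLA : ∀ x, x ∈ L ↔ σ x ∈ A := by
          intro x
          constructor
          · intro hx
            have h0 : q (σ x) = 0 := by rw [h x]; simp [hp, hx]
            by_contra hxa
            by_cases hxi : σ x = i
            · simp [hq, hxa, hxi, hiA] at h0
            · simp [hq, hxa, hxi] at h0
          · intro hxa
            have h0 : q (σ x) = 0 := by simp [hq, hxa]
            rw [h x] at h0
            by_contra hx
            by_cases hxj : x = j
            · simp [hp, hx, hxj, hjL] at h0
            · simp [hp, hx, hxj] at h0
        have hji : σ j = i := by
          have h1 : q (σ j) = 1 := by rw [h j]; simp [hp, hjL]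
          by_cases hja : σ j ∈ A
          · simp [hq, hja] at h1
          · by_cases hji' : σ j = i
            · exact hji'
            · simp [hq, hja, hji'] at h1
        have hpos : σ.symm i = j := by rw [← hji, σ.symm_apply_apply]
        have hsub : permCoal σ (σ.symm i : ℕ) ⊆ A := by
          intro y hy
          rw [mem_permCoal_pos, hpos] at hy
          have hmem : σ.symm y ∈ L := by
            rw [hL, Finset.mem_filter]; exact ⟨Finset.mem_univ _, hy⟩
          have := (hLA (σ.symm y)).mp hmem
          rwa [σ.apply_symm_apply] at this
        apply Finset.eq_of_subset_of_card_le hsub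
        rw [permCoal_pos_card, hpos]
    -- rewrite the filter and count with card_perm_blocks
    have hre : (Finset.univ.filter
          (fun σ : Equiv.Perm (Fin d) => permCoal σ (σ.symm i : ℕ) = A))
        = (Finset.univ.filter (fun σ : Equiv.Perm (Fin d) => ∀ x, q (σ x) = p x)) := by
      apply Finset.filter_congr
      intro σ _
      exact hcond σ
    rw [hre, ← Fintype.card_subtype]
    -- fiber cardinalities
    have hp0 : Fintype.card {x // p x = 0} = A.card := by
      have h1 : Finset.univ.filter (fun x => p x = 0) = L := by
        ext x
        simp only [Finset.mem_filter, Finset.mem_univ, true_and, hp]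
        by_cases hx : x ∈ L <;> by_cases hxj : x = j <;> simp [hx, hxj]
      rw [Fintype.card_subtype, h1, hLcard]
    have hp1 : Fintype.card {x // p x = 1} = 1 := by
      have h1 : Finset.univ.filter (fun x => p x = 1) = {j} := by
        ext x
        simp only [Finset.mem_filter, Finset.mem_univ, true_and, hp, Finset.mem_singleton]
        by_cases hxj : x = j
        · subst hxj; simp [hjL]
        · by_cases hx : x ∈ L <;> simp [hx, hxj]
      rw [Fintype.card_subtype, h1, Finset.card_singleton]
    have hp2 : Fintype.card {x // p x = 2} = d - 1 - A.card := by
      have h1 : Finset.univ.filter (fun x => p x = 2) = Finset.univ \ insert j L := by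
        ext x
        simp only [Finset.mem_filter, Finset.mem_univ, true_and, Finset.mem_sdiff,
          Finset.mem_insert, hp]
        by_cases hx : x ∈ L <;> by_cases hxj : x = j <;> simp [hx, hxj, hjL]
      rw [Fintype.card_subtype, h1, Finset.card_sdiff_of_subset (Finset.subset_univ _),
        Finset.card_univ, Fintype.card_fin, Finset.card_insert_of_notMem hjL, hLcard]
      omega
    have hq0 : Fintype.card {x // q x = 0} = A.card := by
      have h1 : Finset.univ.filter (fun x => q x = 0) = A := by
        ext x
        simp only [Finset.mem_filter, Finset.mem_univ, true_and, hq]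
        by_cases hx : x ∈ A <;> by_cases hxi : x = i <;> simp [hx, hxi]
      rw [Fintype.card_subtype, h1]
    have hq1 : Fintype.card {x // q x = 1} = 1 := by
      have h1 : Finset.univ.filter (fun x => q x = 1) = {i} := by
        ext x
        simp only [Finset.mem_filter, Finset.mem_univ, true_and, hq, Finset.mem_singleton]
        by_cases hxi : x = i
        · subst hxi; simp [hiA]
        · by_cases hx : x ∈ A <;> simp [hx, hxi]
      rw [Fintype.card_subtype, h1, Finset.card_singleton]
    have hq2 : Fintype.card {x // q x = 2} = d - 1 - A.card := by
      have h1 : Finset.univ.filter (fun x => q x = 2) = Finset.univ \ insert i A := by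
        ext x
        simp only [Finset.mem_filter, Finset.mem_univ, true_and, Finset.mem_sdiff,
          Finset.mem_insert, hq]
        by_cases hx : x ∈ A <;> by_cases hxi : x = i <;> simp [hx, hxi, hiA]
      rw [Fintype.card_subtype, h1, Finset.card_sdiff_of_subset (Finset.subset_univ _),
        Finset.card_univ, Fintype.card_fin, Finset.card_insert_of_notMem hiA]
      omega
    have hcards : ∀ b : Fin 3, Fintype.card {x // p x = b} = Fintype.card {x // q x = b} := by
      intro b
      fin_cases b
      · exact hp0.trans hq0.symm
      · exact hp1.trans hq1.symm
      · exact hp2.trans hq2.symm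
    have hc := card_perm_blocks p q hcards
    rw [Fin.prod_univ_three, hp0, hp1, hp2, Nat.factorial_one, mul_one] at hc
    convert hc using 2
  -- regroup the permutation sum by fibers
  have key : ∑ σ : Equiv.Perm (Fin d),
      (v (permCoal σ ((σ.symm i : ℕ) + 1)) - v (permCoal σ (σ.symm i)))
      = ∑ A ∈ (Finset.univ.erase i).powerset,
          ((A.card.factorial * (d - 1 - A.card).factorial : ℕ) : ℝ)
            * (v (insert i A) - v A) := by
    rw [← Finset.sum_fiberwise_of_maps_to hmaps
      (fun σ => v (permCoal σ ((σ.symm i : ℕ) + 1)) - v (permCoal σ (σ.symm i)))]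
    refine Finset.sum_congr rfl fun A hA => ?_
    have hconst : ∀ σ ∈ Finset.univ.filter
        (fun σ : Equiv.Perm (Fin d) => permCoal σ (σ.symm i : ℕ) = A),
        v (permCoal σ ((σ.symm i : ℕ) + 1)) - v (permCoal σ (σ.symm i))
          = v (insert i A) - v A := by
      intro σ hσ
      rw [Finset.mem_filter] at hσ
      rw [succ_pred σ i, hσ.2]
    rw [Finset.sum_congr rfl hconst, Finset.sum_const, hfiber A hA, nsmul_eq_mul]
  rw [key, Finset.mul_sum, Finset.mul_sum]
  refine Finset.sum_congr rfl fun A hA => ?_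
  rw [Finset.mem_powerset] at hA
  have hAcard : A.card ≤ d - 1 := by
    have := Finset.card_le_card hA
    rwa [Finset.card_erase_of_mem (Finset.mem_univ i), Finset.card_univ,
      Fintype.card_fin] at this
  have hfac : (d - 1).choose A.card * A.card.factorial * (d - 1 - A.card).factorial
      = (d - 1).factorial := Nat.choose_mul_factorial_mul_factorial hAcard
  have hdfac : d.factorial = d * (d - 1).factorial := by
    have h1 : d - 1 + 1 = d := by omega
    calc d.factorial = (d - 1 + 1).factorial := by rw [h1]
    _ = (d - 1 + 1) * (d - 1).factorial := Nat.factorial_succ _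
    _ = d * (d - 1).factorial := by rw [h1]
  have hchoose : (0 : ℝ) < ((d - 1).choose A.card : ℝ) := by
    exact_mod_cast Nat.choose_pos hAcard
  have hd' : (0 : ℝ) < (d : ℝ) := by exact_mod_cast hd
  have hdfac' : (0 : ℝ) < (d.factorial : ℝ) := by exact_mod_cast d.factorial_pos
  have hcoef : (1 / d : ℝ) * (((d - 1).choose A.card : ℝ))⁻¹
      = (1 / (d.factorial : ℝ)) * ((A.card.factorial * (d - 1 - A.card).factorial : ℕ) : ℝ) := by
    rw [div_mul_eq_mul_div, div_mul_eq_mul_div, one_mul, one_mul, div_eq_div_iff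
      (by positivity) hdfac'.ne']
    have : ((d - 1).choose A.card : ℝ) * ((A.card.factorial * (d - 1 - A.card).factorial : ℕ) : ℝ)
        = ((d - 1).factorial : ℝ) := by
      push_cast
      rw [← mul_assoc]
      exact_mod_cast hfac
    calc (((d - 1).choose A.card : ℝ))⁻¹ * (d.factorial : ℝ)
        = (((d - 1).choose A.card : ℝ))⁻¹ * ((d : ℝ) * ((d - 1).factorial : ℝ)) := by
          rw [hdfac]; push_cast; ring
      _ = (((d - 1).choose A.card : ℝ))⁻¹ * ((d : ℝ) *
            (((d - 1).choose A.card : ℝ) * ((A.card.factorial * (d - 1 - A.card).factorial : ℕ) : ℝ))) := by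
          rw [this]
      _ = ((A.card.factorial * (d - 1 - A.card).factorial : ℕ) : ℝ) * (d : ℝ) := by
          field_simp
  calc (1 / d : ℝ) * ((((d - 1).choose A.card : ℝ))⁻¹ * (v (insert i A) - v A))
      = ((1 / d : ℝ) * (((d - 1).choose A.card : ℝ))⁻¹) * (v (insert i A) - v A) := by ring
    _ = ((1 / (d.factorial : ℝ)) * ((A.card.factorial * (d - 1 - A.card).factorial : ℕ) : ℝ))
          * (v (insert i A) - v A) := by rw [hcoef]
    _ = (1 / (d.factorial : ℝ)) * (((A.card.factorial * (d - 1 - A.card).factorial : ℕ) : ℝ)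
          * (v (insert i A) - v A)) := by ring
end

section
/- Let (D,v) be a cooperative game. The Shapley values of its subgames satisfy the balanced contributions property: for every A ⊆ D and all distinct i, j ∈ A, Shap_i(A,v) − Shap_i(A\{j},v) = Shap_j(A,v) − Shap_j(A\{i},v). -/
open Finset

/-- The Shapley value of player `i` in the subgame of `(D, v)` on the coalition `A`:
`Shap_i(A,v) = (1/|A|)·Σ_{B ⊆ A\{i}} C(|A|−1,|B|)⁻¹·(v(B∪{i}) − v(B))`. -/
noncomputable def shapleySub {d : ℕ} (v : Finset (Fin d) → ℝ) (A : Finset (Fin d))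
    (i : Fin d) : ℝ :=
  (1 / A.card : ℝ) * ∑ B ∈ (A.erase i).powerset,
    (((A.card - 1).choose B.card : ℝ))⁻¹ * (v (insert i B) - v B)

noncomputable def pcoef (n k : ℕ) : ℝ :=
  if k = 0 then 0 else ((k - 1).factorial * (n - k).factorial : ℝ) / n.factorial

noncomputable def potential {d : ℕ} (v : Finset (Fin d) → ℝ) (A : Finset (Fin d)) : ℝ :=
  ∑ B ∈ A.powerset, pcoef A.card B.card * v B

lemma coef1 (a b : ℕ) (ha : 1 ≤ a) (hb : b ≤ a - 1) :
    pcoef a (b + 1) = (1 / (a : ℝ)) * (((a - 1).choose b : ℝ))⁻¹ := by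
  obtain ⟨m, rfl⟩ : ∃ m, a = m + 1 := ⟨a - 1, by omega⟩
  simp only [Nat.add_sub_cancel] at hb ⊢
  rw [pcoef, if_neg (by omega)]
  rw [Nat.cast_choose ℝ hb]
  have h1 : m + 1 - (b + 1) = m - b := by omega
  rw [h1, Nat.add_sub_cancel, Nat.factorial_succ m]
  have f1 : (b.factorial : ℝ) ≠ 0 := Nat.cast_ne_zero.2 b.factorial_ne_zero
  have f2 : ((m - b).factorial : ℝ) ≠ 0 := Nat.cast_ne_zero.2 (m - b).factorial_ne_zero
  have f3 : (m.factorial : ℝ) ≠ 0 := Nat.cast_ne_zero.2 m.factorial_ne_zero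
  have f4 : ((m : ℝ) + 1) ≠ 0 := by positivity
  field_simp
  norm_cast

lemma coef2 (a b : ℕ) (ha : 1 ≤ a) (hb : 1 ≤ b) (hb' : b ≤ a - 1) :
    pcoef a b - pcoef (a - 1) b = -((1 / (a : ℝ)) * (((a - 1).choose b : ℝ))⁻¹) := by
  obtain ⟨m, rfl⟩ : ∃ m, a = m + 1 := ⟨a - 1, by omega⟩
  obtain ⟨c, rfl⟩ : ∃ c, b = c + 1 := ⟨b - 1, by omega⟩
  simp only [Nat.add_sub_cancel] at hb' ⊢
  rw [pcoef, if_neg (by omega), pcoef, if_neg (by omega)]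
  rw [Nat.cast_choose ℝ hb']
  simp only [Nat.add_sub_cancel]
  have h1 : m + 1 - (c + 1) = m - c := by omega
  have h2 : m - (c + 1) = m - c - 1 := by omega
  rw [h1, h2]
  have h3 : m - c = (m - c - 1) + 1 := by omega
  have h4 : (m - c).factorial = (m - c) * (m - c - 1).factorial := by
    conv_lhs => rw [h3, Nat.factorial_succ]
    rw [← h3]
  rw [Nat.factorial_succ m, h4, Nat.factorial_succ c]
  have f1 : (c.factorial : ℝ) ≠ 0 := Nat.cast_ne_zero.2 c.factorial_ne_zero
  have f2 : ((m - c - 1).factorial : ℝ) ≠ 0 := Nat.cast_ne_zero.2 (m - c - 1).factorial_ne_zero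
  have f3 : (m.factorial : ℝ) ≠ 0 := Nat.cast_ne_zero.2 m.factorial_ne_zero
  have f4 : ((m : ℝ) + 1) ≠ 0 := by positivity
  have hc : (((m - c : ℕ)) : ℝ) = (m : ℝ) - c := by
    push_cast [Nat.cast_sub (by omega : c ≤ m)]; ring
  push_cast [hc]
  field_simp
  ring

lemma shapley_eq_potential_diff {d : ℕ} (v : Finset (Fin d) → ℝ) (hv0 : v ∅ = 0)
    (A : Finset (Fin d)) (i : Fin d) (hi : i ∈ A) :
    shapleySub v A i = potential v A - potential v (A.erase i) := by
  set A' := A.erase i with hA'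
  have hiA' : i ∉ A' := notMem_erase i A
  have hA : A = insert i A' := (insert_erase hi).symm
  have ha1 : 1 ≤ A.card := card_pos.2 ⟨i, hi⟩
  have hcard : A'.card = A.card - 1 := card_erase_of_mem hi
  have hPA : potential v A = ∑ B ∈ A'.powerset, pcoef A.card B.card * v B
      + ∑ B ∈ A'.powerset, pcoef A.card (insert i B).card * v (insert i B) := by
    rw [potential]
    rw [show A.powerset = (insert i A').powerset by rw [← hA]]
    rw [sum_powerset_insert hiA' (fun B => pcoef A.card B.card * v B)]
  rw [hPA, potential, hcard, shapleySub, mul_sum]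
  rw [add_sub_assoc, ← Finset.sum_sub_distrib, ← Finset.sum_add_distrib]
  refine sum_congr rfl fun B hB => ?_
  have hBA' : B ⊆ A' := mem_powerset.1 hB
  have hiB : i ∉ B := fun h => hiA' (hBA' h)
  have hbcard : (insert i B).card = B.card + 1 := card_insert_of_notMem hiB
  have hble : B.card ≤ A.card - 1 := hcard ▸ card_le_card hBA'
  rw [hbcard, coef1 A.card B.card ha1 hble]
  rcases Nat.eq_zero_or_pos B.card with h0 | h1
  · have : B = ∅ := card_eq_zero.1 h0
    subst this
    simp [hv0, pcoef]
  · have := coef2 A.card B.card ha1 h1 hble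
    linear_combination (-(v B)) * this

/-- the Shapley values of the subgames of a cooperative game `(D, v)` satisfy
the balanced contributions property. -/
theorem shapley_balanced_contributions {d : ℕ} (v : Finset (Fin d) → ℝ) (hv0 : v ∅ = 0)
    (A : Finset (Fin d)) (i j : Fin d) (hi : i ∈ A) (hj : j ∈ A) (hij : i ≠ j) :
    shapleySub v A i - shapleySub v (A.erase j) i =
      shapleySub v A j - shapleySub v (A.erase i) j := by
  have hiA : i ∈ A.erase j := mem_erase.2 ⟨hij, hi⟩
  have hjA : j ∈ A.erase i := mem_erase.2 ⟨hij.symm, hj⟩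
  rw [shapley_eq_potential_diff v hv0 A i hi, shapley_eq_potential_diff v hv0 A j hj,
    shapley_eq_potential_diff v hv0 _ i hiA, shapley_eq_potential_diff v hv0 _ j hjA,
    erase_right_comm]
  ring
end
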